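/- arXiv:2102.12662 — 9 statements merged into one kernel-verified Lean document; each statement's English description precedes it below -/
import Mathlib

section
/- Let L be a thin Lie algebra over a field of characteristic ≠ 2 with dim(L_3) = 1, let y span C_{L_1}(L_2), and extend to a basis x, y of L_1. Suppose L_{i-1} contains a nonzero element u with [u,y] = 0, and [L_i, y] ≠ 0. Then L_i is one-dimensional (spanned by [u,x]), [L_i y y] = 0, and L_{i+2} is one-dimensional (spanned by [u x y x]). -/
open Module

/-- A thin Lie algebra structure: a grading of `L` over the positive integers
(`C 0 = ⊥`), internal direct sum, compatible with the bracket, with `L₁`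
two-dimensional and generating `L`, `L` infinite-dimensional, and satisfying
the covering property: for every nonzero homogeneous `z ∈ Lᵢ`,
`span [z, L₁] = L_{i+1}`. -/
structure IsThinGraded (F : Type*) (L : Type*) [Field F] [LieRing L] [LieAlgebra F L]
    (C : ℕ → Submodule F L) : Prop where
  zero_bot : C 0 = ⊥
  internal : DirectSum.IsInternal C
  bracket_mem : ∀ i j : ℕ, ∀ u ∈ C i, ∀ v ∈ C j, ⁅u, v⁆ ∈ C (i + j)
  dim_one : Module.finrank F (C 1) = 2
  generates : LieSubalgebra.lieSpan F L ((C 1 : Submodule F L) : Set L) = ⊤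
  infinite_dim : ¬ Module.Finite F L
  covering : ∀ i : ℕ, ∀ z ∈ C i, z ≠ 0 →
    Submodule.span F {w : L | ∃ a ∈ C 1, w = ⁅z, a⁆} = C (i + 1)

/-- If `⁅z, y⁆ = 0` then the span of `⁅z, C 1⁆` equals the span of `⁅z, x⁆`. -/
lemma thin_span_bracket_aux {F L : Type*} [Field F] [LieRing L] [LieAlgebra F L]
    {C : ℕ → Submodule F L} {x y : L} (hx1 : x ∈ C 1)
    (hbasis : Submodule.span F {x, y} = C 1)
    {z : L} (hzy : ⁅z, y⁆ = 0) :
    Submodule.span F {w : L | ∃ a ∈ C 1, w = ⁅z, a⁆} = Submodule.span F {⁅z, x⁆} := by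
  apply le_antisymm
  · rw [Submodule.span_le]
    rintro w ⟨a, ha, rfl⟩
    rw [← hbasis, Submodule.mem_span_pair] at ha
    obtain ⟨c, d, rfl⟩ := ha
    have : ⁅z, c • x + d • y⁆ = c • ⁅z, x⁆ := by
      rw [lie_add, lie_smul, lie_smul, hzy, smul_zero, add_zero]
    rw [SetLike.mem_coe, this]
    exact Submodule.smul_mem _ _ (Submodule.mem_span_singleton_self _)
  · rw [Submodule.span_le, Set.singleton_subset_iff]
    exact Submodule.subset_span ⟨x, hx1, rfl⟩

/-- Lemma (uxyy): if `L_{i}` has a nonzero element `u` centralized by `y` and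
`[L_{i+1}, y] ≠ 0`, then `L_{i+1}` is one-dimensional spanned by `[u,x]`,
`[L_{i+1} y y] = 0`, and `L_{i+3}` is one-dimensional spanned by `[uxyx]`. -/
theorem thin_uxyy {F L : Type*} [Field F] [LieRing L] [LieAlgebra F L]
    (h2 : (2 : F) ≠ 0)
    {C : ℕ → Submodule F L} (hthin : IsThinGraded F L C)
    (h3 : Module.finrank F (C 3) = 1)
    {x y : L} (hy1 : y ∈ C 1) (hy0 : y ≠ 0) (hyc : ∀ v ∈ C 2, ⁅y, v⁆ = 0)
    (hx1 : x ∈ C 1) (hbasis : Submodule.span F {x, y} = C 1)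
    {i : ℕ} (hi : 1 ≤ i) {u : L} (hu : u ∈ C i) (hu0 : u ≠ 0) (huy : ⁅u, y⁆ = 0)
    (hLi : ∃ w ∈ C (i + 1), ⁅w, y⁆ ≠ 0) :
    C (i + 1) = Submodule.span F {⁅u, x⁆} ∧
    (∀ w ∈ C (i + 1), ⁅⁅w, y⁆, y⁆ = 0) ∧
    C (i + 3) = Submodule.span F {⁅⁅⁅u, x⁆, y⁆, x⁆} := by
  -- Claim 1: `C (i+1) = span {⁅u, x⁆}`.
  have hC1 : C (i + 1) = Submodule.span F {⁅u, x⁆} := by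
    rw [← hthin.covering i u hu hu0, thin_span_bracket_aux hx1 hbasis huy]
  -- Key computation: `⁅⁅⁅u, x⁆, y⁆, y⁆ = 0`.
  have hxy2 : ⁅x, y⁆ ∈ C 2 := hthin.bracket_mem 1 1 x hx1 y hy1
  have hux_y : ⁅⁅u, x⁆, y⁆ = ⁅u, ⁅x, y⁆⁆ := by
    rw [lie_lie, huy, lie_zero, sub_zero]
  have h0 : ⁅⁅x, y⁆, y⁆ = 0 := by
    rw [← lie_skew, hyc _ hxy2, neg_zero]
  have hkey : ⁅⁅⁅u, x⁆, y⁆, y⁆ = 0 := by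
    rw [hux_y, lie_lie, huy, lie_zero, sub_zero, h0, lie_zero]
  -- Claim 2.
  have hC2 : ∀ w ∈ C (i + 1), ⁅⁅w, y⁆, y⁆ = 0 := by
    intro w hw
    rw [hC1, Submodule.mem_span_singleton] at hw
    obtain ⟨c, rfl⟩ := hw
    rw [smul_lie, smul_lie, hkey, smul_zero]
  refine ⟨hC1, hC2, ?_⟩
  -- Claim 3.
  obtain ⟨w, hw, hwy⟩ := hLi
  have hwmem := hw
  rw [hC1, Submodule.mem_span_singleton] at hwmem
  obtain ⟨c, rfl⟩ := hwmem
  have hz0 : ⁅⁅u, x⁆, y⁆ ≠ 0 := by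
    intro h
    apply hwy
    rw [smul_lie, h, smul_zero]
  have hzmem : ⁅⁅u, x⁆, y⁆ ∈ C (i + 2) :=
    hthin.bracket_mem (i + 1) 1 _ (hthin.bracket_mem i 1 u hu x hx1) y hy1
  have := hthin.covering (i + 2) _ hzmem hz0
  rw [thin_span_bracket_aux hx1 hbasis hkey] at this
  rw [show i + 2 + 1 = i + 3 from rfl] at this
  exact this.symm
end

section
/- Let L be a thin Lie algebra over a field of characteristic ≠ 2 with dim(L_3) = 1, and let y span C_{L_1}(L_2). In any two consecutive homogeneous components L_i, L_{i+1} (with i ≥ 1), at least one contains a nonzero element centralized by y. -/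
open Module

/-- The covering property expressed with `Submodule.map`. -/
theorem IsThinGraded.cov_map {F L : Type*} [Field F] [LieRing L] [LieAlgebra F L]
    {C : ℕ → Submodule F L} (hthin : IsThinGraded F L C)
    {i : ℕ} {z : L} (hz : z ∈ C i) (hz0 : z ≠ 0) :
    (C 1).map (LieAlgebra.ad F L z) = C (i + 1) := by
  have h := hthin.covering i z hz hz0
  have hset : {w : L | ∃ a ∈ C 1, w = ⁅z, a⁆} =
      ((C 1).map (LieAlgebra.ad F L z) : Set L) := by
    ext w
    simp only [Set.mem_setOf_eq, SetLike.mem_coe, Submodule.mem_map,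
      LieAlgebra.ad_apply]
    constructor
    · rintro ⟨a, ha, rfl⟩; exact ⟨a, ha, rfl⟩
    · rintro ⟨a, ha, rfl⟩; exact ⟨a, ha, rfl⟩
  rw [hset, Submodule.span_eq] at h
  exact h

/-- Every homogeneous component of positive degree is nonzero. -/
theorem IsThinGraded.component_ne_bot {F L : Type*} [Field F] [LieRing L] [LieAlgebra F L]
    {C : ℕ → Submodule F L} (hthin : IsThinGraded F L C)
    {n : ℕ} (hn : 1 ≤ n) : C n ≠ ⊥ := by
  by_contra hbot
  -- take the least index `j ≥ 1` with `C j = ⊥`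
  have hex : ∃ j, 1 ≤ j ∧ C j = ⊥ := ⟨n, hn, hbot⟩
  classical
  obtain ⟨j, ⟨hj1, hjbot⟩, hmin⟩ := Nat.findX hex
  have hminlt : ∀ m, 1 ≤ m → m < j → C m ≠ ⊥ := fun m hm1 hmlt hmb =>
    hmin m hmlt ⟨hm1, hmb⟩
  -- j ≥ 2 since C 1 has dimension 2
  have hC1ne : C 1 ≠ ⊥ := by
    intro h
    have := hthin.dim_one
    rw [h, finrank_bot] at this
    exact (by norm_num : (0 : ℕ) ≠ 2) this
  have hj2 : 2 ≤ j := by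
    rcases Nat.lt_or_ge j 2 with h | h
    · interval_cases j
      · exact absurd hjbot hC1ne
    · exact h
  -- key vanishing lemma
  have key : ∀ b a : ℕ, 1 ≤ a → a < j → 1 ≤ b → b < j → j ≤ a + b →
      ∀ u ∈ C a, ∀ v ∈ C b, ⁅u, v⁆ = 0 := by
    intro b
    induction b using Nat.strong_induction_on with
    | _ b ih =>
      intro a ha1 haj hb1 hbj hab u hu v hv
      rcases Nat.lt_or_ge b 2 with hb2 | hb2
      · -- b = 1, so a + 1 ≥ j and a < j force a + 1 = j
        have hb : b = 1 := le_antisymm (by omega) hb1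
        subst hb
        have : a + 1 = j := by omega
        have hmem : ⁅u, v⁆ ∈ C (a + 1) := hthin.bracket_mem a 1 u hu v hv
        rw [this, hjbot] at hmem
        exact hmem
      · -- b ≥ 2 : use covering on C (b-1)
        obtain ⟨z, hz, hz0⟩ := (C (b - 1)).ne_bot_iff.mp
          (hminlt (b - 1) (by omega) (by omega))
        have hcov := hthin.cov_map hz hz0
        have hb1' : b - 1 + 1 = b := by omega
        rw [hb1'] at hcov
        rw [← hcov] at hv
        obtain ⟨c, hc, rfl⟩ := hv
        rw [LieAlgebra.ad_apply, leibniz_lie]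
        have huz : ⁅u, z⁆ ∈ C (a + (b - 1)) := hthin.bracket_mem _ _ u hu z hz
        have hterm1 : ⁅⁅u, z⁆, c⁆ = 0 := by
          rcases Nat.lt_or_ge (a + b) (j + 1) with habj | habj
          · -- a + b = j, so ⁅u,z⁆ ∈ C (j-1), bracket with C 1 lands in C j = ⊥
            have h1 : a + (b - 1) + 1 = j := by omega
            have : ⁅⁅u, z⁆, c⁆ ∈ C (a + (b - 1) + 1) :=
              hthin.bracket_mem _ _ _ huz c hc
            rw [h1, hjbot] at this
            exact this
          · -- a + b > j : induction kills ⁅u, z⁆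
            have : ⁅u, z⁆ = 0 := ih (b - 1) (by omega) a ha1 haj (by omega)
              (by omega) (by omega) u hu z hz
            rw [this, zero_lie]
        have huc : ⁅u, c⁆ ∈ C (a + 1) := hthin.bracket_mem _ _ u hu c hc
        have hterm2 : ⁅z, ⁅u, c⁆⁆ = 0 := by
          rcases Nat.lt_or_ge (a + 1) j with haj' | haj'
          · have : ⁅⁅u, c⁆, z⁆ = 0 := ih (b - 1) (by omega) (a + 1) (by omega)
              haj' (by omega) (by omega) (by omega) _ huc z hz
            rw [← lie_skew, this, neg_zero]
          · have h1 : a + 1 = j := by omega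
            rw [h1, hjbot] at huc
            rw [huc, lie_zero]
        rw [hterm1, hterm2, add_zero]
  -- the span of components of degree < j is a Lie subalgebra
  set M : Submodule F L := ⨆ m : Finset.Icc 1 (j - 1), C m with hM
  have hle : ∀ m : ℕ, 1 ≤ m → m < j → C m ≤ M := by
    intro m hm1 hmj
    exact le_iSup (fun m : Finset.Icc 1 (j - 1) => C m)
      ⟨m, by simp [Finset.mem_Icc]; omega⟩
  have hcore : ∀ (a b : ℕ), 1 ≤ a → a < j → 1 ≤ b → b < j →
      ∀ u ∈ C a, ∀ v ∈ C b, ⁅u, v⁆ ∈ M := by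
    intro a b ha1 haj hb1 hbj u hu v hv
    rcases Nat.lt_or_ge (a + b) j with habj | habj
    · exact hle (a + b) (by omega) habj (hthin.bracket_mem a b u hu v hv)
    · rw [key b a ha1 haj hb1 hbj habj u hu v hv]
      exact M.zero_mem
  have hlie : ∀ u ∈ M, ∀ v ∈ M, ⁅u, v⁆ ∈ M := by
    intro u hu v hv
    refine Submodule.iSup_induction _ (motive := fun u => ⁅u, v⁆ ∈ M) hu ?_ ?_ ?_
    · rintro ⟨a, hamem⟩ x hx
      simp only [Finset.mem_Icc] at hamem
      refine Submodule.iSup_induction _ (motive := fun v => ⁅x, v⁆ ∈ M) hv ?_ ?_ ?_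
      · rintro ⟨b, hbmem⟩ w hw
        simp only [Finset.mem_Icc] at hbmem
        exact hcore a b hamem.1 (by omega) hbmem.1 (by omega) x hx w hw
      · simp
      · intro w₁ w₂ h1 h2
        rw [lie_add]; exact M.add_mem h1 h2
    · simp
    · intro x₁ x₂ h1 h2
      rw [add_lie]; exact M.add_mem h1 h2
  let K : LieSubalgebra F L :=
    { M with lie_mem' := fun {x y} hx hy => hlie x hx y hy }
  have hC1K : ((C 1 : Submodule F L) : Set L) ⊆ K := by
    intro x hx
    exact hle 1 le_rfl (by omega) hx
  have hKtop : M = ⊤ := by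
    have h := LieSubalgebra.lieSpan_le.mpr hC1K
    rw [hthin.generates] at h
    have : ∀ x : L, x ∈ M := fun x => h (LieSubalgebra.mem_top x)
    exact Submodule.eq_top_iff'.mpr this
  -- but M is finitely generated, contradiction with infinite dimensionality
  have hfg : ∀ m : ℕ, 1 ≤ m → m < j → (C m).FG := by
    intro m hm1 hmj
    induction m with
    | zero => omega
    | succ k ihk =>
      rcases Nat.eq_or_lt_of_le hm1 with h1 | h1
      · -- m = 1
        have : (1 : ℕ) = k + 1 := h1
        have hfin : Module.Finite F (C (k + 1)) := by
          rw [← this]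
          exact Module.finite_of_finrank_pos (by rw [hthin.dim_one]; norm_num)
        exact (Submodule.fg_iff_finiteDimensional _).mpr hfin
      · -- m = k+1 ≥ 2, so C m is the image of C 1 under ad z
        obtain ⟨z, hz, hz0⟩ := (C k).ne_bot_iff.mp (hminlt k (by omega) (by omega))
        rw [← hthin.cov_map hz hz0]
        refine Submodule.FG.map _ ?_
        exact (Submodule.fg_iff_finiteDimensional _).mpr
          (Module.finite_of_finrank_pos (by rw [hthin.dim_one]; norm_num))
  have hMfg : M.FG := by
    have : M = ⨆ m ∈ Finset.Icc 1 (j - 1), C m := by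
      rw [hM, iSup_subtype]
    rw [this, ← Finset.sup_eq_iSup]
    refine Submodule.fg_finset_sup _ _ ?_
    intro m hm
    simp only [Finset.mem_Icc] at hm
    exact hfg m hm.1 (by omega)
  refine hthin.infinite_dim ?_
  rw [Module.finite_def, ← hKtop]
  exact hMfg

/-- Of any two consecutive homogeneous components, at least one contains a
nonzero element centralized by `y`. -/
theorem thin_consecutive_centralized {F L : Type*} [Field F] [LieRing L] [LieAlgebra F L]
    (h2 : (2 : F) ≠ 0)
    {C : ℕ → Submodule F L} (hthin : IsThinGraded F L C)
    (h3 : Module.finrank F (C 3) = 1)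
    {y : L} (hy1 : y ∈ C 1) (hy0 : y ≠ 0) (hyc : ∀ v ∈ C 2, ⁅y, v⁆ = 0)
    {i : ℕ} (hi : 1 ≤ i) :
    (∃ u ∈ C i, u ≠ 0 ∧ ⁅u, y⁆ = 0) ∨ (∃ u ∈ C (i + 1), u ≠ 0 ∧ ⁅u, y⁆ = 0) := by
  induction i, hi using Nat.le_induction with
  | base => exact Or.inl ⟨y, hy1, hy0, lie_self y⟩
  | succ i hi ih =>
    rcases ih with ⟨u, hu, hu0, huy⟩ | h
    · -- nonzero u ∈ C i with ⁅u, y⁆ = 0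
      obtain ⟨v, hv, hv0⟩ := (C (i + 1)).ne_bot_iff.mp
        (hthin.component_ne_bot (by omega))
      have hcov := hthin.cov_map hu hu0
      rw [← hcov] at hv
      obtain ⟨a, ha, rfl⟩ := hv
      simp only [LieAlgebra.ad_apply] at hv0
      by_cases hvy : ⁅⁅u, a⁆, y⁆ = 0
      · exact Or.inl ⟨⁅u, a⁆, hthin.bracket_mem i 1 u hu a ha, hv0, hvy⟩
      · -- the bracket with y is a nonzero element of C (i+2) killed by y
        refine Or.inr ⟨⁅⁅u, a⁆, y⁆,
          hthin.bracket_mem (i + 1) 1 _ (hthin.bracket_mem i 1 u hu a ha) y hy1,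
          hvy, ?_⟩
        have hay : ⁅a, y⁆ ∈ C 2 := hthin.bracket_mem 1 1 a ha y hy1
        have hrw : ⁅⁅u, a⁆, y⁆ = ⁅u, ⁅a, y⁆⁆ := by
          rw [lie_lie, huy, lie_zero, sub_zero]
        have h0 : ⁅⁅a, y⁆, y⁆ = 0 := by
          rw [← lie_skew, hyc _ hay, neg_zero]
        rw [hrw, lie_lie, huy, lie_zero, sub_zero, h0, lie_zero]
    · exact Or.inl h
end

section
/- Let L be a thin Lie algebra over a field of characteristic ≠ 2 with dim(L_3) = 1, and let y span C_{L_1}(L_2). If [L_j y y] ≠ 0 for some j, then dim(L_j) = 2. -/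
open Module

namespace ThinDiamondAux

variable {F L : Type*} [Field F] [LieRing L] [LieAlgebra F L]

/-- Iterated bracket spans: `f C n ⊆ C (n+1)` is the part generated by `C 1`. -/
def f (C : ℕ → Submodule F L) : ℕ → Submodule F L
  | 0 => C 1
  | (n+1) => Submodule.span F {w : L | ∃ u ∈ f C n, ∃ a ∈ C 1, w = ⁅u, a⁆}

variable {C : ℕ → Submodule F L}

theorem f_succ (n : ℕ) :
    f C (n+1) = Submodule.span F {w : L | ∃ u ∈ f C n, ∃ a ∈ C 1, w = ⁅u, a⁆} := rfl

theorem lie_mem_f_succ {n : ℕ} {u a : L} (hu : u ∈ f C n) (ha : a ∈ C 1) :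
    ⁅u, a⁆ ∈ f C (n+1) :=
  Submodule.subset_span ⟨u, hu, a, ha, rfl⟩

theorem f_le (hthin : IsThinGraded F L C) : ∀ n, f C n ≤ C (n+1)
  | 0 => le_rfl
  | (n+1) => by
      rw [f_succ]
      refine Submodule.span_le.2 ?_
      rintro w ⟨u, hu, a, ha, rfl⟩
      exact hthin.bracket_mem (n+1) 1 u (f_le hthin n hu) a ha

theorem lie_f_mem (n : ℕ) : ∀ (m : ℕ) ⦃u w : L⦄, u ∈ f C m → w ∈ f C n →
    ⁅u, w⁆ ∈ f C (m + n + 1) := by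
  induction n with
  | zero => exact fun m u w hu hw => lie_mem_f_succ hu hw
  | succ n IH =>
      intro m u w hu hw
      rw [f_succ] at hw
      induction hw using Submodule.span_induction with
      | mem x hx =>
          obtain ⟨v, hv, a, ha, rfl⟩ := hx
          rw [leibniz_lie]
          refine add_mem (lie_mem_f_succ (IH m hu hv) ha) ?_
          have h2 := IH (m+1) (lie_mem_f_succ hu ha) hv
          rw [show m + 1 + n + 1 = m + (n+1) + 1 by omega] at h2
          rw [← lie_skew]
          exact neg_mem h2
      | zero => rw [lie_zero]; exact zero_mem _
      | add x x' hx hx' px px' => rw [lie_add]; exact add_mem px px'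
      | smul c x hx px => rw [lie_smul]; exact Submodule.smul_mem _ _ px

theorem lie_mem_f_iSup_right {m : ℕ} {u z : L} (hu : u ∈ f C m) (hz : z ∈ ⨆ n, f C n) :
    ⁅u, z⁆ ∈ ⨆ n, f C n := by
  refine Submodule.iSup_induction (motive := fun t => ⁅u, t⁆ ∈ ⨆ n, f C n) (f C) hz ?_ ?_ ?_
  · intro n w hw; exact Submodule.mem_iSup_of_mem (m+n+1) (lie_f_mem n m hu hw)
  · show ⁅u, (0:L)⁆ ∈ ⨆ n, f C n; rw [lie_zero]; exact zero_mem _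
  · intro a b pa pb
    show ⁅u, a + b⁆ ∈ ⨆ n, f C n
    rw [lie_add]; exact add_mem pa pb

theorem lie_mem_iSup_f {x z : L} (hx : x ∈ ⨆ n, f C n) (hz : z ∈ ⨆ n, f C n) :
    ⁅x, z⁆ ∈ ⨆ n, f C n := by
  refine Submodule.iSup_induction (motive := fun t => ⁅t, z⁆ ∈ ⨆ n, f C n) (f C) hx ?_ ?_ ?_
  · intro m u hu; exact lie_mem_f_iSup_right hu hz
  · show ⁅(0:L), z⁆ ∈ ⨆ n, f C n; rw [zero_lie]; exact zero_mem _
  · intro a b pa pb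
    show ⁅a + b, z⁆ ∈ ⨆ n, f C n
    rw [add_lie]; exact add_mem pa pb

theorem mem_iSup_f (hthin : IsThinGraded F L C) (x : L) : x ∈ ⨆ n, f C n := by
  let K : LieSubalgebra F L :=
    { toSubmodule := ⨆ n, f C n
      lie_mem' := fun hx hz => lie_mem_iSup_f hx hz }
  have h1 : LieSubalgebra.lieSpan F L ((C 1 : Submodule F L) : Set L) ≤ K :=
    (LieSubalgebra.lieSpan_le).2 (fun u hu => Submodule.mem_iSup_of_mem 0 hu)
  exact h1 (hthin.generates.symm ▸ (LieSubalgebra.mem_top x))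

theorem succ_eq_bot (hthin : IsThinGraded F L C) {k : ℕ} (hk : C (k+1) = ⊥) :
    C (k+2) = ⊥ := by
  have hf : f C k = ⊥ := le_bot_iff.1 (hk ▸ f_le hthin k)
  have hf1 : f C (k+1) = ⊥ := by
    rw [f_succ]
    refine le_bot_iff.1 (Submodule.span_le.2 ?_)
    rintro w ⟨u, hu, a, ha, rfl⟩
    rw [hf, Submodule.mem_bot] at hu
    subst hu
    simp
  have hT : (⨆ n, f C n) ≤ ⨆ i, ⨆ (_ : i ≠ k+2), C i := by
    refine iSup_le fun n => ?_
    by_cases hn : n = k+1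
    · subst hn; rw [hf1]; exact bot_le
    · exact le_trans (f_le hthin n)
        (le_iSup_of_le (n+1) (le_iSup_of_le (by omega) le_rfl))
  have hdisj := hthin.internal.submodule_iSupIndep (i := k+2)
  rw [eq_bot_iff]
  intro x hx
  have hx2 : x ∈ ⨆ i, ⨆ (_ : i ≠ k+2), C i := hT (mem_iSup_f hthin x)
  exact hdisj.le_bot (Submodule.mem_inf.2 ⟨hx, hx2⟩)

theorem prev_ne_bot (hthin : IsThinGraded F L C) {k : ℕ} (h : C (k+2) ≠ ⊥) :
    C (k+1) ≠ ⊥ := fun hb => h (succ_eq_bot hthin hb)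

theorem finC1 (hthin : IsThinGraded F L C) : Module.Finite F (C 1) :=
  FiniteDimensional.of_finrank_pos (by rw [hthin.dim_one]; omega)

theorem finC (hthin : IsThinGraded F L C) (k : ℕ) :
    Module.Finite F (C (k+2)) ∧ finrank F (C (k+2)) ≤ 2 := by
  by_cases hbot : C (k+1) = ⊥
  · rw [succ_eq_bot hthin hbot]
    exact ⟨inferInstance, by simp⟩
  · obtain ⟨z, hz, hz0⟩ := (Submodule.ne_bot_iff _).1 hbot
    haveI := finC1 hthin
    let φ : (C 1) →ₗ[F] L :=
      { toFun := fun a => ⁅z, (a : L)⁆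
        map_add' := fun a b => by simp [lie_add]
        map_smul' := fun c a => by simp [lie_smul] }
    have hrange : C (k+2) = LinearMap.range φ := by
      rw [← hthin.covering (k+1) z hz hz0]
      have hset : {w : L | ∃ a ∈ C 1, w = ⁅z, a⁆} = Set.range φ := by
        ext w
        constructor
        · rintro ⟨a, ha, rfl⟩; exact ⟨⟨a, ha⟩, rfl⟩
        · rintro ⟨⟨a, ha⟩, rfl⟩; exact ⟨a, ha, rfl⟩
      rw [hset, ← LinearMap.coe_range, Submodule.span_eq]
    rw [hrange]
    refine ⟨Module.Finite.range φ, ?_⟩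
    calc finrank F (LinearMap.range φ) ≤ finrank F (C 1) := LinearMap.finrank_range_le φ
    _ = 2 := hthin.dim_one

theorem key (hthin : IsThinGraded F L C) {y : L} (hy1 : y ∈ C 1)
    (hyc : ∀ v ∈ C 2, ⁅y, v⁆ = 0) :
    ∀ j, ∀ z ∈ C j, finrank F (C j) ≤ 1 → ⁅⁅z, y⁆, y⁆ = 0 := by
  intro j
  induction j using Nat.strong_induction_on with
  | _ j IH =>
    match j, IH with
    | 0, _ => intro z hz _; rw [hthin.zero_bot, Submodule.mem_bot] at hz; simp [hz]
    | 1, _ => intro z hz hr; rw [hthin.dim_one] at hr; omega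
    | (k+2), IH =>
      intro z hz hr
      by_cases hz0 : z = 0
      · simp [hz0]
      have hCne : C (k+2) ≠ ⊥ := fun hb => hz0 (by rw [hb, Submodule.mem_bot] at hz; exact hz)
      have hprev := prev_ne_bot hthin hCne
      by_cases hp : ∃ p ∈ C (k+1), p ≠ 0 ∧ ⁅p, y⁆ = 0
      · obtain ⟨p, hpmem, hp0, hpy⟩ := hp
        have hcov := hthin.covering (k+1) p hpmem hp0
        rw [← hcov] at hz
        clear hz0 hCne hr
        induction hz using Submodule.span_induction with
        | mem w hw =>
            obtain ⟨a, ha, rfl⟩ := hw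
            have h1 : ⁅⁅p, a⁆, y⁆ = ⁅p, ⁅a, y⁆⁆ := by
              rw [lie_lie, hpy]; simp
            have hay2 : ⁅a, y⁆ ∈ C 2 := hthin.bracket_mem 1 1 a ha y hy1
            have h2 : ⁅⁅a, y⁆, y⁆ = 0 := by
              rw [← lie_skew, hyc _ hay2, neg_zero]
            rw [h1, lie_lie, h2, hpy]
            simp
        | zero => simp
        | add u v hu hv pu pv => rw [add_lie, add_lie, pu, pv, add_zero]
        | smul c u hu pu => rw [smul_lie, smul_lie, pu, smul_zero]
      · push_neg at hp
        obtain ⟨w, hwmem, hw0⟩ := (Submodule.ne_bot_iff _).1 hprev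
        have hwy : ⁅w, y⁆ ≠ 0 := hp w hwmem hw0
        haveI hfin2 : Module.Finite F (C (k+2)) := (finC hthin k).1
        let ψ : (C (k+1)) →ₗ[F] (C (k+2)) :=
          { toFun := fun p => ⟨⁅(p : L), y⁆, hthin.bracket_mem (k+1) 1 p p.2 y hy1⟩
            map_add' := fun a b => by ext; simp [add_lie]
            map_smul' := fun c a => by ext; simp [smul_lie] }
        have hinj : Function.Injective ψ := by
          intro a b hab
          have hval : ⁅(a : L), y⁆ = ⁅(b : L), y⁆ := congrArg Subtype.val hab
          have h0 : ⁅(a : L) - (b : L), y⁆ = 0 := by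
            rw [sub_lie, hval, sub_self]
          by_contra hne
          have hsub : (a : L) - (b : L) ≠ 0 :=
            sub_ne_zero.2 (fun h => hne (Subtype.ext h))
          exact hp _ (sub_mem a.2 b.2) hsub h0
        have hr1 : finrank F (C (k+1)) ≤ 1 :=
          le_trans (LinearMap.finrank_le_finrank_of_injective hinj) hr
        have hwyy : ⁅⁅w, y⁆, y⁆ = 0 := IH (k+1) (by omega) w hwmem hr1
        have hwy2 : ⁅w, y⁆ ∈ C (k+2) := hthin.bracket_mem (k+1) 1 w hwmem y hy1
        have hspan : Submodule.span F {⁅w, y⁆} = C (k+2) := by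
          apply Submodule.eq_of_le_of_finrank_le
          · rw [Submodule.span_singleton_le_iff_mem]; exact hwy2
          · rw [finrank_span_singleton hwy]; exact hr
        have hzmem : z ∈ Submodule.span F {⁅w, y⁆} := hspan.symm ▸ hz
        obtain ⟨c, hc⟩ := Submodule.mem_span_singleton.1 hzmem
        rw [← hc, smul_lie, smul_lie, hwyy, zero_lie, smul_zero]

end ThinDiamondAux

/-- If `[L_j y y] ≠ 0` then `L_j` is a diamond. -/
theorem thin_diamond_of_yy_ne_zero {F L : Type*} [Field F] [LieRing L] [LieAlgebra F L]
    (h2 : (2 : F) ≠ 0)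
    {C : ℕ → Submodule F L} (hthin : IsThinGraded F L C)
    (h3 : Module.finrank F (C 3) = 1)
    {y : L} (hy1 : y ∈ C 1) (hy0 : y ≠ 0) (hyc : ∀ v ∈ C 2, ⁅y, v⁆ = 0)
    {j : ℕ} (hj : ∃ u ∈ C j, ⁅⁅u, y⁆, y⁆ ≠ 0) :
    Module.finrank F (C j) = 2 := by
  obtain ⟨u, hu, huy⟩ := hj
  have hu0 : u ≠ 0 := fun h => huy (by simp [h])
  match j with
  | 0 =>
      rw [hthin.zero_bot, Submodule.mem_bot] at hu
      exact absurd hu hu0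
  | 1 => exact hthin.dim_one
  | (k+2) =>
      have hle := (ThinDiamondAux.finC hthin k).2
      by_contra hne
      have hr : Module.finrank F (C (k+2)) ≤ 1 := by omega
      exact huy (ThinDiamondAux.key hthin hy1 hyc (k+2) u hu hr)
end

section
/- Let L be a thin Lie algebra over a field of characteristic ≠ 2 with dim(L_3) = 1, and let y span C_{L_1}(L_2). If L_j and L_{j+2} are both diamonds (two-dimensional), then [L_j y y] ≠ 0. -/
open Module

section Aux

variable {F L : Type*} [Field F] [LieRing L] [LieAlgebra F L]

/-- Iterated bracket spaces generated by `C 1`. -/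
def thinDSeq (C : ℕ → Submodule F L) : ℕ → Submodule F L
  | 0 => ⊥
  | 1 => C 1
  | (n+2) => Submodule.span F {w : L | ∃ u ∈ thinDSeq C (n+1), ∃ a ∈ C 1, w = ⁅u, a⁆}

variable {C : ℕ → Submodule F L}

lemma thinDSeq_le (hb : ∀ i j : ℕ, ∀ u ∈ C i, ∀ v ∈ C j, ⁅u, v⁆ ∈ C (i + j)) :
    ∀ n, thinDSeq C n ≤ C n := by
  intro n
  induction n using Nat.strong_induction_on with
  | _ n ih =>
    match n with
    | 0 => simp [thinDSeq]
    | 1 => simp [thinDSeq]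
    | (n+2) =>
      rw [thinDSeq, Submodule.span_le]
      rintro w ⟨u, hu, a, ha, rfl⟩
      exact hb (n+1) 1 u (ih (n+1) (by omega) hu) a ha

lemma thinDSeq_lie :
    ∀ k m : ℕ, ∀ u ∈ thinDSeq C m, ∀ v ∈ thinDSeq C k, ⁅u, v⁆ ∈ thinDSeq C (m + k) := by
  intro k
  induction k using Nat.strong_induction_on with
  | _ k ih =>
    match k with
    | 0 =>
      intro m u hu v hv
      rw [thinDSeq, Submodule.mem_bot] at hv
      simp only [hv, lie_zero]
      exact Submodule.zero_mem _
    | 1 =>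
      intro m u hu v hv
      match m with
      | 0 =>
        rw [thinDSeq, Submodule.mem_bot] at hu
        simp only [hu, zero_lie]
        exact Submodule.zero_mem _
      | (m+1) =>
        show ⁅u, v⁆ ∈ thinDSeq C (m + 2)
        rw [thinDSeq]
        exact Submodule.subset_span ⟨u, hu, v, hv, rfl⟩
    | (k+2) =>
      intro m u hu v hv
      rw [thinDSeq] at hv
      induction hv using Submodule.span_induction with
      | mem w hw =>
        obtain ⟨p, hp, a, ha, rfl⟩ := hw
        have h1 : ⁅u, p⁆ ∈ thinDSeq C (m + (k+1)) := ih (k+1) (by omega) m u hu p hp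
        have h2 : ⁅⁅u, p⁆, a⁆ ∈ thinDSeq C (m + (k+1) + 1) :=
          ih 1 (by omega) (m + (k+1)) _ h1 a ha
        have h3 : ⁅u, a⁆ ∈ thinDSeq C (m + 1) := ih 1 (by omega) m u hu a ha
        have h4 : ⁅⁅u, a⁆, p⁆ ∈ thinDSeq C (m + 1 + (k+1)) :=
          ih (k+1) (by omega) (m+1) _ h3 p hp
        rw [leibniz_lie u p a, show ⁅p, ⁅u,a⁆⁆ = -⁅⁅u,a⁆,p⁆ by rw [← lie_skew]]
        rw [show m + (k+1) + 1 = m + (k+2) from by omega] at h2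
        rw [show m + 1 + (k+1) = m + (k+2) from by omega] at h4
        exact Submodule.add_mem _ h2 (Submodule.neg_mem _ h4)
      | zero => simp only [lie_zero]; exact Submodule.zero_mem _
      | add x y _ _ hx hy => rw [lie_add]; exact Submodule.add_mem _ hx hy
      | smul c x _ hx => rw [lie_smul]; exact Submodule.smul_mem _ c hx

lemma thinDSeq_iSup_eq_top (hgen : LieSubalgebra.lieSpan F L ((C 1 : Submodule F L) : Set L) = ⊤) :
    (⨆ n, thinDSeq C n) = ⊤ := by
  set P : Submodule F L := ⨆ n, thinDSeq C n with hP
  have hlie : ∀ x ∈ P, ∀ y ∈ P, ⁅x, y⁆ ∈ P := by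
    intro x hx y hy
    refine Submodule.iSup_induction (motive := fun z => ⁅z, y⁆ ∈ P) (thinDSeq C) hx ?_ ?_ ?_
    · intro i x hxi
      refine Submodule.iSup_induction (motive := fun w => ⁅x, w⁆ ∈ P) (thinDSeq C) hy ?_ ?_ ?_
      · intro j w hwj
        exact Submodule.mem_iSup_of_mem (i + j) (thinDSeq_lie j i x hxi w hwj)
      · simp only [lie_zero]; exact Submodule.zero_mem _
      · intro a b ha hb; rw [lie_add]; exact Submodule.add_mem _ ha hb
    · simp only [zero_lie]; exact Submodule.zero_mem _
    · intro a b ha hb; rw [add_lie]; exact Submodule.add_mem _ ha hb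
  let K : LieSubalgebra F L :=
    { P with lie_mem' := fun {x y} hx hy => hlie x hx y hy }
  have h1 : LieSubalgebra.lieSpan F L ((C 1 : Submodule F L) : Set L) ≤ K := by
    rw [LieSubalgebra.lieSpan_le]
    intro a ha
    exact Submodule.mem_iSup_of_mem 1 (show a ∈ thinDSeq C 1 from ha)
  rw [hgen] at h1
  exact eq_top_iff.mpr fun x _ => h1 (LieSubalgebra.mem_top x)

/-- Generation: if `C n = ⊥` for `n ≥ 1` then `C (n+1) = ⊥`. -/
lemma thin_succ_bot (hthin : IsThinGraded F L C) {n : ℕ} (hn : 1 ≤ n) (h : C n = ⊥) :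
    C (n+1) = ⊥ := by
  -- all thinDSeq C m = ⊥ for m ≥ n
  have hD : ∀ m, n ≤ m → thinDSeq C m = ⊥ := by
    intro m
    induction m with
    | zero => intro hm; exact absurd (le_trans hn hm) (by omega)
    | succ m ihm =>
      intro hm
      rcases Nat.lt_or_ge n (m+1) with hlt | hge
      · -- n ≤ m, so thinDSeq C m = ⊥ ; also m+1 ≥ 2
        have hDm : thinDSeq C m = ⊥ := ihm (by omega)
        obtain ⟨m', rfl⟩ : ∃ m', m = m' + 1 := ⟨m - 1, by omega⟩
        rw [thinDSeq, eq_bot_iff, Submodule.span_le]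
        rintro w ⟨u, hu, a, ha, rfl⟩
        rw [hDm, Submodule.mem_bot] at hu
        simp [hu]
      · -- n = m+1
        have : n = m + 1 := by omega
        subst this
        exact eq_bot_iff.mpr (le_trans (thinDSeq_le hthin.bracket_mem (m+1)) (h ▸ le_refl _))
  have htop := thinDSeq_iSup_eq_top (C := C) hthin.generates
  have hindep := hthin.internal.submodule_iSupIndep
  have hdisj := hindep (n+1)
  -- ⊤ ≤ ⨆ j ≠ n+1, C j
  have hle : (⨆ m, thinDSeq C m) ≤ ⨆ j, ⨆ (_ : j ≠ n + 1), C j := by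
    refine iSup_le fun m => ?_
    rcases Nat.lt_or_ge m n with hm | hm
    · refine le_trans (thinDSeq_le hthin.bracket_mem m) ?_
      exact le_iSup_of_le m (le_iSup_of_le (by omega) le_rfl)
    · rw [hD m hm]; exact bot_le
  rw [htop] at hle
  have : Disjoint (C (n+1)) ⊤ := hdisj.mono_right (le_trans le_top hle)
  simpa [disjoint_top] using this

end Aux

/-- If `L_j` and `L_{j+2}` are both diamonds then `[L_j y y] ≠ 0`. -/
theorem thin_diamonds_distance_two {F L : Type*} [Field F] [LieRing L] [LieAlgebra F L]
    (h2 : (2 : F) ≠ 0)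
    {C : ℕ → Submodule F L} (hthin : IsThinGraded F L C)
    (h3 : Module.finrank F (C 3) = 1)
    {y : L} (hy1 : y ∈ C 1) (hy0 : y ≠ 0) (hyc : ∀ v ∈ C 2, ⁅y, v⁆ = 0)
    {j : ℕ} (hj : 1 ≤ j) (hdj : Module.finrank F (C j) = 2)
    (hdj2 : Module.finrank F (C (j + 2)) = 2) :
    ∃ u ∈ C j, ⁅⁅u, y⁆, y⁆ ≠ 0 := by
  classical
  have hfin1 : FiniteDimensional F (C 1) :=
    FiniteDimensional.of_finrank_pos (by rw [hthin.dim_one]; norm_num)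
  have hfinj : FiniteDimensional F (C j) :=
    FiniteDimensional.of_finrank_pos (by rw [hdj]; norm_num)
  have hCj2ne : C (j + 2) ≠ ⊥ := by
    intro hb
    rw [hb, finrank_bot] at hdj2
    exact absurd hdj2 (by norm_num)
  have hCj1ne : C (j + 1) ≠ ⊥ := by
    intro hb
    exact hCj2ne (thin_succ_bot hthin (by omega) hb)
  have hCjne : C j ≠ ⊥ := by
    intro hb
    rw [hb, finrank_bot] at hdj
    exact absurd hdj (by norm_num)
  -- The linear map `a ↦ ⁅z, a⁆` on `C 1` has range `C (i+1)` for nonzero `z ∈ C i`.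
  have key : ∀ (i : ℕ) (z : L), z ∈ C i → z ≠ 0 →
      ∃ φ : (C 1) →ₗ[F] L, (∀ a : C 1, φ a = ⁅z, (a : L)⁆) ∧ LinearMap.range φ = C (i + 1) := by
    intro i z hz hz0
    refine ⟨{ toFun := fun a => ⁅z, (a : L)⁆,
              map_add' := fun a b => by simp [lie_add],
              map_smul' := fun c a => by simp [lie_smul] }, fun a => rfl, ?_⟩
    rw [← hthin.covering i z hz hz0]
    apply le_antisymm
    · rintro w ⟨a, rfl⟩
      exact Submodule.subset_span ⟨(a : L), a.2, rfl⟩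
    · rw [Submodule.span_le]
      rintro w ⟨a, ha, rfl⟩
      exact ⟨⟨a, ha⟩, rfl⟩
  -- Claim 1: any nonzero `z ∈ C (j+1)` has `⁅z, y⁆ ≠ 0`.
  have claim1 : ∀ z ∈ C (j + 1), z ≠ 0 → ⁅z, y⁆ ≠ 0 := by
    intro z hz hz0 hzy
    obtain ⟨φ, hφ, hrange⟩ := key (j + 1) z hz hz0
    have hker : (⟨y, hy1⟩ : C 1) ∈ LinearMap.ker φ := by
      rw [LinearMap.mem_ker, hφ]; exact hzy
    have hkerne : LinearMap.ker φ ≠ ⊥ := by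
      intro hb
      rw [hb, Submodule.mem_bot] at hker
      exact hy0 (by simpa using congrArg Subtype.val hker)
    have h1 : 1 ≤ finrank F (LinearMap.ker φ) := by
      rw [Nat.one_le_iff_ne_zero]
      exact fun h0 => hkerne (Submodule.finrank_eq_zero.mp h0)
    have hrn := LinearMap.finrank_range_add_finrank_ker φ
    rw [hthin.dim_one] at hrn
    have h2 : finrank F (LinearMap.range φ) ≤ 1 := by omega
    rw [hrange, show j + 1 + 1 = j + 2 from rfl, hdj2] at h2
    exact absurd h2 (by norm_num)
  -- Claim 2: some `u ∈ C j` has `⁅u, y⁆ ≠ 0`.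
  have claim2 : ∃ u ∈ C j, ⁅u, y⁆ ≠ 0 := by
    by_contra hno
    push_neg at hno
    obtain ⟨z₀, hz₀, hz₀0⟩ := Submodule.exists_mem_ne_zero_of_ne_bot hCjne
    obtain ⟨φ₀, hφ₀, hrange₀⟩ := key j z₀ hz₀ hz₀0
    have hfinj1 : FiniteDimensional F (C (j + 1)) := by
      rw [← hrange₀]; exact φ₀.finiteDimensional_range
    -- `finrank C (j+1) = 1`
    have hyker₀ : (⟨y, hy1⟩ : C 1) ∈ LinearMap.ker φ₀ := by
      rw [LinearMap.mem_ker, hφ₀]; exact hno z₀ hz₀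
    have hker₀ne : LinearMap.ker φ₀ ≠ ⊥ := by
      intro hb
      rw [hb, Submodule.mem_bot] at hyker₀
      exact hy0 (by simpa using congrArg Subtype.val hyker₀)
    have h1 : 1 ≤ finrank F (LinearMap.ker φ₀) := by
      rw [Nat.one_le_iff_ne_zero]
      exact fun h0 => hker₀ne (Submodule.finrank_eq_zero.mp h0)
    have hrn₀ := LinearMap.finrank_range_add_finrank_ker φ₀
    rw [hthin.dim_one, hrange₀] at hrn₀
    have hj1le : finrank F (C (j + 1)) ≤ 1 := by omega
    have hj1pos : finrank F (C (j + 1)) ≠ 0 :=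
      fun h0 => hCj1ne (Submodule.finrank_eq_zero.mp h0)
    have hj1 : finrank F (C (j + 1)) = 1 := by omega
    -- pick `xh ∈ C 1` with `φ₀ xh ≠ 0`
    have hφ₀ne : φ₀ ≠ 0 := by
      intro h
      exact hCj1ne (by rw [← hrange₀, h, LinearMap.range_zero])
    obtain ⟨xh, hxh⟩ : ∃ a : C 1, φ₀ a ≠ 0 := by
      by_contra hall
      push_neg at hall
      exact hφ₀ne (LinearMap.ext fun a => by rw [hall a]; rfl)
    -- the map `u ↦ ⁅u, xh⁆` on `C j` has nontrivial kernel
    let θ : (C j) →ₗ[F] L :=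
      { toFun := fun u => ⁅(u : L), (xh : L)⁆,
        map_add' := fun a b => by simp [add_lie],
        map_smul' := fun c a => by simp [smul_lie] }
    have hθrangele : LinearMap.range θ ≤ C (j + 1) := by
      rintro w ⟨u, rfl⟩
      exact hthin.bracket_mem j 1 (u : L) u.2 (xh : L) xh.2
    have hθr : finrank F (LinearMap.range θ) ≤ 1 := by
      rw [← hj1]
      exact Submodule.finrank_mono hθrangele
    have hrnθ := LinearMap.finrank_range_add_finrank_ker θ
    rw [hdj] at hrnθ
    have hθker : LinearMap.ker θ ≠ ⊥ := by
      intro hb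
      rw [hb, finrank_bot] at hrnθ
      omega
    obtain ⟨uh, huhk, huh0⟩ := Submodule.exists_mem_ne_zero_of_ne_bot hθker
    set z : L := (uh : L) with hzdef
    have hz : z ∈ C j := (uh : C j).2
    have hz0 : z ≠ 0 := fun h => huh0 (Subtype.ext h)
    -- `ker φ_z = span {yh}` and `xh ∈ ker φ_z`, so `xh ∈ span {yh}`
    obtain ⟨φ, hφ, hrange⟩ := key j z hz hz0
    have hxk : xh ∈ LinearMap.ker φ := by
      rw [LinearMap.mem_ker, hφ]
      simpa [θ] using (LinearMap.mem_ker.mp huhk)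
    have hyk : (⟨y, hy1⟩ : C 1) ∈ LinearMap.ker φ := by
      rw [LinearMap.mem_ker, hφ]; exact hno z hz
    have hrn := LinearMap.finrank_range_add_finrank_ker φ
    rw [hthin.dim_one, hrange, hj1] at hrn
    have hky : finrank F (LinearMap.ker φ) = 1 := by omega
    have hyhne : (⟨y, hy1⟩ : C 1) ≠ 0 := by
      intro h
      exact hy0 (by simpa using congrArg Subtype.val h)
    have hsple : Submodule.span F {(⟨y, hy1⟩ : C 1)} ≤ LinearMap.ker φ := by
      rw [Submodule.span_le, Set.singleton_subset_iff]; exact hyk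
    have hsp : Submodule.span F {(⟨y, hy1⟩ : C 1)} = LinearMap.ker φ :=
      Submodule.eq_of_le_of_finrank_le hsple (by rw [hky, finrank_span_singleton hyhne])
    rw [← hsp, Submodule.mem_span_singleton] at hxk
    obtain ⟨c, hc⟩ := hxk
    apply hxh
    rw [← hc, map_smul, hφ₀]
    show c • ⁅z₀, y⁆ = 0
    rw [hno z₀ hz₀, smul_zero]
  obtain ⟨u, hu, huy⟩ := claim2
  refine ⟨u, hu, ?_⟩
  exact claim1 ⁅u, y⁆ (hthin.bracket_mem j 1 u hu y hy1) huy
end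

section
/- Let L be a thin Lie algebra over a field of odd characteristic with dim(L_3) = 1, let y span C_{L_1}(L_2). Suppose [L y y] ≠ 0 and let j be minimal with [L_j y y] ≠ 0. Then L_{j-2} and L_{j-3} are one-dimensional and both are centralized by y (i.e. [L_{j-2}, y] = 0 and [L_{j-3}, y] = 0). -/
open Module

section Aux

variable {F L : Type*} [Field F] [LieRing L] [LieAlgebra F L]

/-- Iterated bracket spans: `DD C1 n` corresponds to degree `n+1`. -/
def DD (C1 : Submodule F L) : ℕ → Submodule F L
  | 0 => C1
  | n+1 => Submodule.span F {w | ∃ u ∈ DD C1 n, ∃ a ∈ C1, w = ⁅u, a⁆}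

lemma DD_succ (C1 : Submodule F L) (n : ℕ) :
    DD C1 (n+1) = Submodule.span F {w | ∃ u ∈ DD C1 n, ∃ a ∈ C1, w = ⁅u, a⁆} := rfl

lemma DD_lie (C1 : Submodule F L) :
    ∀ n m : ℕ, ∀ u ∈ DD C1 m, ∀ v ∈ DD C1 n, ⁅u, v⁆ ∈ DD C1 (m + n + 1) := by
  intro n
  induction n with
  | zero =>
    intro m u hu v hv
    exact Submodule.subset_span ⟨u, hu, v, hv, rfl⟩
  | succ n ih =>
    intro m u hu v hv
    rw [DD_succ] at hv
    induction hv using Submodule.span_induction with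
    | mem w hw =>
      obtain ⟨v', hv', a, ha, rfl⟩ := hw
      have h1 : ⁅u, v'⁆ ∈ DD C1 (m + n + 1) := ih m u hu v' hv'
      have h2 : ⁅⁅u, v'⁆, a⁆ ∈ DD C1 (m + n + 2) := Submodule.subset_span ⟨_, h1, a, ha, rfl⟩
      have h3 : ⁅u, a⁆ ∈ DD C1 (m + 1) := Submodule.subset_span ⟨u, hu, a, ha, rfl⟩
      have h4 : ⁅⁅u, a⁆, v'⁆ ∈ DD C1 (m + 1 + n + 1) := ih (m + 1) _ h3 v' hv'
      have e : m + 1 + n + 1 = m + n + 2 := by omega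
      rw [e] at h4
      have h5 : ⁅v', ⁅u, a⁆⁆ ∈ DD C1 (m + n + 2) := by
        rw [← lie_skew]
        exact neg_mem h4
      have e2 : m + (n + 1) + 1 = m + n + 2 := by omega
      rw [e2, leibniz_lie]
      exact add_mem h2 h5
    | zero => simp
    | add x y hx hy ihx ihy =>
      rw [lie_add]
      exact add_mem ihx ihy
    | smul r x hx ihx =>
      rw [lie_smul]
      exact Submodule.smul_mem _ _ ihx

lemma DD_le_C {C : ℕ → Submodule F L}
    (hb : ∀ i j : ℕ, ∀ u ∈ C i, ∀ v ∈ C j, ⁅u, v⁆ ∈ C (i + j)) :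
    ∀ n, DD (C 1) n ≤ C (n + 1) := by
  intro n
  induction n with
  | zero => exact le_rfl
  | succ n ih =>
    rw [DD_succ]
    refine Submodule.span_le.mpr ?_
    rintro w ⟨u, hu, a, ha, rfl⟩
    exact hb (n + 1) 1 u (ih hu) a ha

lemma C_le_DD {C : ℕ → Submodule F L} (hthin : IsThinGraded F L C) :
    ∀ n, C (n + 1) ≤ DD (C 1) n := by
  classical
  have hT : ∀ x : L, x ∈ (⨆ n, DD (C 1) n : Submodule F L) := by
    intro x
    set T : Submodule F L := ⨆ n, DD (C 1) n with hTdef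
    have hclosed : ∀ {a b : L}, a ∈ T → b ∈ T → ⁅a, b⁆ ∈ T := by
      intro a b ha hb
      refine Submodule.iSup_induction (motive := fun a : L => ⁅a, b⁆ ∈ T) _ ha ?_ (by simp) ?_
      · intro m u hu
        refine Submodule.iSup_induction (motive := fun b : L => ⁅u, b⁆ ∈ T) _ hb ?_ (by simp) ?_
        · intro n v hv
          exact Submodule.mem_iSup_of_mem (m + n + 1) (DD_lie (C 1) n m u hu v hv)
        · intro v w hv hw
          rw [lie_add]
          exact add_mem hv hw
      · intro u v hu hv
        rw [add_lie]
        exact add_mem hu hv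
    let T' : LieSubalgebra F L := { T with lie_mem' := fun {a b} ha hb => hclosed ha hb }
    have hle : LieSubalgebra.lieSpan F L ((C 1 : Submodule F L) : Set L) ≤ T' :=
      LieSubalgebra.lieSpan_le.mpr (fun z hz => Submodule.mem_iSup_of_mem 0 hz)
    have hx : x ∈ LieSubalgebra.lieSpan F L ((C 1 : Submodule F L) : Set L) := by
      rw [hthin.generates]; exact LieSubalgebra.mem_top x
    exact hle hx
  intro n x hx
  set e := LinearEquiv.ofBijective (DirectSum.coeLinearMap C) hthin.internal with he
  have hπ : ∀ z : L, z ∈ (⨆ m, DD (C 1) m : Submodule F L) →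
      ((e.symm z (n + 1) : C (n + 1)) : L) ∈ DD (C 1) n := by
    intro z hz
    refine Submodule.iSup_induction
      (motive := fun z : L => ((e.symm z (n + 1) : C (n + 1)) : L) ∈ DD (C 1) n) _ hz ?_ ?_ ?_
    · intro m u hu
      by_cases hmn : m = n
      · subst hmn
        have hu' : u ∈ C (m + 1) := DD_le_C hthin.bracket_mem m hu
        rw [he, hthin.internal.ofBijective_coeLinearMap_of_mem hu']
        exact hu
      · have hu' : u ∈ C (m + 1) := DD_le_C hthin.bracket_mem m hu
        rw [he, hthin.internal.ofBijective_coeLinearMap_of_mem_ne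
          (show m + 1 ≠ n + 1 by omega) hu']
        simp
    · show ((e.symm (0 : L) (n + 1) : C (n + 1)) : L) ∈ DD (C 1) n
      rw [map_zero]
      simp
    · intro a b ha hb
      show ((e.symm (a + b) (n + 1) : C (n + 1)) : L) ∈ DD (C 1) n
      rw [map_add, DirectSum.add_apply, Submodule.coe_add]
      exact add_mem ha hb
  have := hπ x (hT x)
  rwa [he, hthin.internal.ofBijective_coeLinearMap_of_mem hx] at this

lemma C_le_span {C : ℕ → Submodule F L} (hthin : IsThinGraded F L C) (n : ℕ) :
    C (n + 2) ≤ Submodule.span F {w | ∃ u ∈ C (n + 1), ∃ a ∈ C 1, w = ⁅u, a⁆} := by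
  refine (C_le_DD hthin (n + 1)).trans ?_
  rw [DD_succ]
  refine Submodule.span_mono ?_
  rintro w ⟨u, hu, a, ha, hw⟩
  exact ⟨u, DD_le_C hthin.bracket_mem n hu, a, ha, hw⟩

lemma lie_aux {z a y : L} (h1 : ⁅z, y⁆ = 0) (h2 : ⁅y, ⁅a, y⁆⁆ = 0) :
    ⁅⁅⁅z, a⁆, y⁆, y⁆ = 0 := by
  have e1 : ⁅⁅z, a⁆, y⁆ = ⁅z, ⁅a, y⁆⁆ := by rw [lie_lie, h1, lie_zero, sub_zero]
  have e2 : ⁅⁅a, y⁆, y⁆ = (0 : L) := by rw [← lie_skew, h2, neg_zero]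
  rw [e1, lie_lie, h1, lie_zero, sub_zero, e2, lie_zero]

end Aux

/-- If `j` is minimal with `[L_j y y] ≠ 0`, then `L_{j-2}` and `L_{j-3}` are
one-dimensional and centralized by `y`. -/
theorem thin_minimal_yy {F L : Type*} [Field F] [LieRing L] [LieAlgebra F L]
    (hp : ringChar F ≠ 0) (h2 : ringChar F ≠ 2)
    {C : ℕ → Submodule F L} (hthin : IsThinGraded F L C)
    (h3 : Module.finrank F (C 3) = 1)
    {y : L} (hy1 : y ∈ C 1) (hy0 : y ≠ 0) (hyc : ∀ v ∈ C 2, ⁅y, v⁆ = 0)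
    {j : ℕ} (hj : ∃ u ∈ C j, ⁅⁅u, y⁆, y⁆ ≠ 0)
    (hmin : ∀ i < j, ∀ u ∈ C i, ⁅⁅u, y⁆, y⁆ = 0) :
    Module.finrank F (C (j - 2)) = 1 ∧ Module.finrank F (C (j - 3)) = 1 ∧
    (∀ u ∈ C (j - 2), ⁅u, y⁆ = 0) ∧ (∀ u ∈ C (j - 3), ⁅u, y⁆ = 0) := by
  obtain ⟨u0, hu0C, hu0⟩ := hj
  have hu0ne : u0 ≠ 0 := by
    intro h; apply hu0; simp [h]
  -- basis x', y of C 1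
  haveI hfd1 : Module.Finite F (C 1) := Module.finite_of_finrank_eq_succ hthin.dim_one
  have hyC1 : Submodule.span F {y} ≤ C 1 := by
    rw [Submodule.span_singleton_le_iff_mem]; exact hy1
  have hylt : Submodule.span F {y} < C 1 := by
    refine lt_of_le_of_ne hyC1 ?_
    intro h
    have := finrank_span_singleton (K := F) hy0
    rw [h, hthin.dim_one] at this
    omega
  obtain ⟨x', hx'1, hx'ny⟩ := SetLike.exists_of_lt hylt
  have hx'span : ∀ a ∈ C 1, ∃ α β : F, a = α • x' + β • y := by
    have hP2le : Submodule.span F {x', y} ≤ C 1 := by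
      refine Submodule.span_le.mpr ?_
      rintro w (rfl | rfl)
      exacts [hx'1, hy1]
    have hP2 : Submodule.span F {x', y} = C 1 := by
      rcases eq_or_lt_of_le hP2le with h | h
      · exact h
      · exfalso
        have hlt1 : Submodule.span F {y} < Submodule.span F {x', y} := by
          refine lt_of_le_of_ne (Submodule.span_mono (by simp)) ?_
          intro hEq
          exact hx'ny (hEq ▸ Submodule.subset_span (by simp))
        haveI : Module.Finite F (Submodule.span F {x', y}) :=
          Submodule.finiteDimensional_of_le hP2le
        have c1 := Submodule.finrank_lt_finrank_of_lt hlt1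
        have c2 := Submodule.finrank_lt_finrank_of_lt h
        rw [finrank_span_singleton (K := F) hy0] at c1
        rw [hthin.dim_one] at c2
        omega
    intro a ha
    have : a ∈ Submodule.span F {x', y} := hP2 ▸ ha
    obtain ⟨α, β, hab⟩ := Submodule.mem_span_pair.mp this
    exact ⟨α, β, hab.symm⟩
  -- two ≠ 0
  have htwo : (2 : F) ≠ 0 := Ring.two_ne_zero h2
  have hhalf : ∀ u : L, u = -u → u = 0 := by
    intro u hu
    have h2u : (2 : F) • u = 0 := by
      rw [two_smul]
      nth_rewrite 2 [hu]
      simp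
    rcases smul_eq_zero.mp h2u with h | h
    · exact absurd h htwo
    · exact h
  -- [a,y] ∈ C 2 facts
  have hyc2 : ∀ a ∈ C 1, ⁅y, ⁅a, y⁆⁆ = 0 := fun a ha =>
    hyc _ (hthin.bracket_mem 1 1 a ha y hy1)
  -- Lemma K
  have hK : ∀ (i : ℕ) (v : L), v ∈ C i → v ≠ 0 → ⁅v, y⁆ = 0 →
      ∀ u ∈ C (i + 1), ⁅⁅u, y⁆, y⁆ = 0 := by
    intro i v hv hv0 hvy u hu
    rw [← hthin.covering i v hv hv0] at hu
    induction hu using Submodule.span_induction with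
    | mem w hw =>
      obtain ⟨a, ha, rfl⟩ := hw
      exact lie_aux hvy (hyc2 a ha)
    | zero => simp
    | add a b ha hb iha ihb => rw [add_lie, add_lie, iha, ihb, add_zero]
    | smul r a ha iha => rw [smul_lie, smul_lie, iha, smul_zero]
  -- vanishing helper
  have hzero : ∀ z : L, ⁅z, x'⁆ = 0 → ⁅z, y⁆ = 0 → ∀ a ∈ C 1, ⁅z, a⁆ = 0 := by
    intro z h1 hzy a ha
    obtain ⟨α, β, rfl⟩ := hx'span a ha
    rw [lie_add, lie_smul, lie_smul, h1, hzy, smul_zero, smul_zero, add_zero]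
  -- j ≥ 3
  have hj3 : 3 ≤ j := by
    by_contra hlt
    push_neg at hlt
    interval_cases j
    · rw [hthin.zero_bot, Submodule.mem_bot] at hu0C
      subst hu0C; simp at hu0
    · apply hu0
      rw [← lie_skew, hyc _ (hthin.bracket_mem 1 1 u0 hu0C y hy1), neg_zero]
    · apply hu0
      have : ⁅u0, y⁆ = 0 := by
        rw [← lie_skew, hyc _ hu0C, neg_zero]
      rw [this, zero_lie]
  have e32 : j - 3 + 1 = j - 2 := by omega
  have e21 : j - 2 + 1 = j - 1 := by omega
  have e10 : j - 1 + 1 = j := by omega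
  -- Claim A
  have hA : ∀ w ∈ C (j - 2), ⁅w, y⁆ = 0 := by
    intro w hw
    by_contra hne
    have hz : ⁅w, y⁆ ∈ C (j - 1) := by
      have := hthin.bracket_mem (j - 2) 1 w hw y hy1
      rwa [e21] at this
    have hzy : ⁅⁅w, y⁆, y⁆ = 0 := hmin (j - 2) (by omega) w hw
    have := hK (j - 1) ⁅w, y⁆ hz hne hzy u0 (by rwa [e10])
    exact hu0 this
  -- Claim B
  have hB : ∀ w ∈ C (j - 3), ⁅w, y⁆ = 0 := by
    intro w hw
    by_contra hne
    have hzC : ⁅w, y⁆ ∈ C (j - 2) := by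
      have := hthin.bracket_mem (j - 3) 1 w hw y hy1
      rwa [e32] at this
    have hzy : ⁅⁅w, y⁆, y⁆ = 0 := hmin (j - 3) (by omega) w hw
    set z := ⁅w, y⁆ with hzdef
    set t := ⁅x', y⁆ with htdef
    have hyt : ⁅y, t⁆ = 0 := hyc _ (hthin.bracket_mem 1 1 x' hx'1 y hy1)
    set v := ⁅z, x'⁆ with hvdef
    have hvC : v ∈ C (j - 1) := by
      have := hthin.bracket_mem (j - 2) 1 z hzC x' hx'1
      rwa [e21] at this
    -- [w,x'] ∈ C (j-2), so Claim A applies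
    have hwx'C : ⁅w, x'⁆ ∈ C (j - 2) := by
      have := hthin.bracket_mem (j - 3) 1 w hw x' hx'1
      rwa [e32] at this
    have hArel : (0 : L) = ⁅w, t⁆ - ⁅x', z⁆ := by
      rw [← hA _ hwx'C, lie_lie]
    have hs : ⁅w, t⁆ = -v := by
      have h1 : ⁅w, t⁆ = ⁅x', z⁆ := by
        have := hArel
        rw [eq_comm, sub_eq_zero] at this
        exact this
      rw [h1, ← lie_skew]
    have hvy1 : ⁅v, y⁆ = ⁅z, t⁆ := by
      rw [hvdef, lie_lie, hzy, lie_zero, sub_zero]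
    have hzt : ⁅z, t⁆ = ⁅⁅w, t⁆, y⁆ := by
      rw [hzdef, lie_lie, hyt, lie_zero, zero_sub, ← lie_skew, neg_neg]
    have hvyneg : ⁅v, y⁆ = -⁅v, y⁆ := by
      calc ⁅v, y⁆ = ⁅z, t⁆ := hvy1
        _ = ⁅⁅w, t⁆, y⁆ := hzt
        _ = ⁅-v, y⁆ := by rw [hs]
        _ = -⁅v, y⁆ := neg_lie v y
    have hvy0 : ⁅v, y⁆ = 0 := hhalf _ hvyneg
    by_cases hv0 : v = 0
    · -- then z kills C 1, so C (j-1) = ⊥, so C j = ⊥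
      have hzy0 : ⁅z, y⁆ = 0 := hzy
      have hzx0 : ⁅z, x'⁆ = 0 := by rw [← hvdef]; exact hv0
      have hCj1bot : C (j - 1) = ⊥ := by
        rw [← e21, ← hthin.covering (j - 2) z hzC hne]
        refine le_bot_iff.mp (Submodule.span_le.mpr ?_)
        rintro _ ⟨a, ha, rfl⟩
        rw [SetLike.mem_coe, Submodule.mem_bot]
        exact hzero z hzx0 hzy0 a ha
      have hCjbot : C j = ⊥ := by
        have hle2 := C_le_span hthin (j - 2)
        have e2 : j - 2 + 2 = j := by omega
        rw [e2, e21] at hle2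
        refine le_bot_iff.mp (hle2.trans (Submodule.span_le.mpr ?_))
        rintro _ ⟨u, hu, a, ha, rfl⟩
        rw [hCj1bot, Submodule.mem_bot] at hu
        subst hu
        simp
      rw [hCjbot, Submodule.mem_bot] at hu0C
      exact hu0ne hu0C
    · have := hK (j - 1) v hvC hv0 hvy0 u0 (by rwa [e10])
      exact hu0 this
  -- step lemma: if a positive component vanishes so does the next
  have hCbot : ∀ n : ℕ, 1 ≤ n → C n = ⊥ → C (n + 1) = ⊥ := by
    intro n h1 hb
    obtain ⟨m, rfl⟩ : ∃ m, n = m + 1 := ⟨n - 1, by omega⟩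
    have hle := C_le_span hthin m
    refine le_bot_iff.mp (hle.trans (Submodule.span_le.mpr ?_))
    rintro _ ⟨u, hu, a, ha, rfl⟩
    rw [hb, Submodule.mem_bot] at hu
    subst hu
    simp
  have hCne : ∀ n : ℕ, 1 ≤ n → n ≤ j → C n ≠ ⊥ := by
    intro n h1 h2 hb
    have hall : ∀ k : ℕ, C (n + k) = ⊥ := by
      intro k
      induction k with
      | zero => exact hb
      | succ k ih => exact hCbot (n + k) (by omega) ih
    have hj' := hall (j - n)
    rw [show n + (j - n) = j by omega] at hj'
    rw [hj', Submodule.mem_bot] at hu0C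
    exact hu0ne hu0C
  -- j ≥ 5
  have hj5 : 5 ≤ j := by
    by_contra hlt
    push_neg at hlt
    have hC1y : ∀ a ∈ C 1, ⁅a, y⁆ = 0 := by
      have hcase : j = 3 ∨ j = 4 := by omega
      rcases hcase with rfl | rfl
      · exact hA
      · exact hB
    have hx'y : ⁅x', y⁆ = 0 := hC1y x' hx'1
    have hyx' : ⁅y, x'⁆ = 0 := by rw [← lie_skew, hx'y, neg_zero]
    have hC2 : C 2 = ⊥ := by
      have hle := C_le_span hthin 0
      refine le_bot_iff.mp (hle.trans (Submodule.span_le.mpr ?_))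
      rintro _ ⟨u, hu, a, ha, rfl⟩
      rw [SetLike.mem_coe, Submodule.mem_bot]
      obtain ⟨α, β, rfl⟩ := hx'span u hu
      obtain ⟨γ, δ, rfl⟩ := hx'span a ha
      simp [lie_add, add_lie, lie_smul, smul_lie, hx'y, hyx']
    have hC3 : C 3 = ⊥ := hCbot 2 (by omega) hC2
    rw [hC3] at h3
    rw [finrank_bot] at h3
    exact absurd h3 (by norm_num)
  -- dimension of C (j-2)
  obtain ⟨w', hw'C, hw'0⟩ := (Submodule.ne_bot_iff _).mp (hCne (j - 3) (by omega) (by omega))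
  have hcov2 : Submodule.span F {w : L | ∃ a ∈ C 1, w = ⁅w', a⁆} = C (j - 2) := by
    have h := hthin.covering (j - 3) w' hw'C hw'0
    rwa [e32] at h
  set v' := ⁅w', x'⁆ with hv'def
  have hv'C : v' ∈ C (j - 2) := by
    have h := hthin.bracket_mem (j - 3) 1 w' hw'C x' hx'1
    rwa [e32] at h
  have hCj2span : C (j - 2) = Submodule.span F {v'} := by
    refine le_antisymm ?_ ((Submodule.span_singleton_le_iff_mem v' _).mpr hv'C)
    rw [← hcov2]
    refine Submodule.span_le.mpr ?_
    rintro _ ⟨a, ha, rfl⟩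
    obtain ⟨α, β, rfl⟩ := hx'span a ha
    rw [SetLike.mem_coe]
    rw [lie_add, lie_smul, lie_smul, hB w' hw'C, smul_zero, add_zero]
    exact Submodule.smul_mem _ _ (Submodule.mem_span_singleton_self v')
  have hv'0 : v' ≠ 0 := by
    intro h
    apply hCne (j - 2) (by omega) (by omega)
    rw [hCj2span, h, Submodule.span_zero_singleton]
  have dim2 : finrank F (C (j - 2)) = 1 := by
    rw [hCj2span]
    exact finrank_span_singleton hv'0
  -- dimension of C (j-3)
  haveI hfd2 : Module.Finite F (C (j - 2)) := Module.finite_of_finrank_eq_succ dim2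
  have hmemf : ∀ w : C (j - 3), ⁅(w : L), x'⁆ ∈ C (j - 2) := by
    intro w
    have h := hthin.bracket_mem (j - 3) 1 w w.2 x' hx'1
    rwa [e32] at h
  let f : C (j - 3) →ₗ[F] C (j - 2) :=
    { toFun := fun w => ⟨⁅(w : L), x'⁆, hmemf w⟩
      map_add' := by intro a b; apply Subtype.ext; simp [add_lie]
      map_smul' := by intro r a; apply Subtype.ext; simp [smul_lie] }
  have hfinj : Function.Injective f := by
    rw [← LinearMap.ker_eq_bot, LinearMap.ker_eq_bot']
    intro w hfw
    have hwx : ⁅(w : L), x'⁆ = 0 := congrArg Subtype.val hfw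
    by_contra hw0
    have hwne : (w : L) ≠ 0 := fun h => hw0 (Subtype.ext h)
    apply hCne (j - 2) (by omega) (by omega)
    have hcov := hthin.covering (j - 3) (w : L) w.2 hwne
    rw [e32] at hcov
    rw [← hcov]
    refine le_bot_iff.mp (Submodule.span_le.mpr ?_)
    rintro _ ⟨a, ha, rfl⟩
    rw [SetLike.mem_coe, Submodule.mem_bot]
    exact hzero (w : L) hwx (hB (w : L) w.2) a ha
  have dim3le : finrank F (C (j - 3)) ≤ 1 := by
    have h := LinearMap.finrank_le_finrank_of_injective hfinj
    rwa [dim2] at h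
  haveI hfd3 : FiniteDimensional F (C (j - 3)) := FiniteDimensional.of_injective f hfinj
  have dim3pos : 0 < finrank F (C (j - 3)) :=
    finrank_pos_iff.mpr (Submodule.nontrivial_iff_ne_bot.mpr (hCne (j - 3) (by omega) (by omega)))
  have dim3 : finrank F (C (j - 3)) = 1 := by omega
  exact ⟨dim2, dim3, hA, hB⟩
end

section
/- Let L be a thin Lie algebra over a field of odd characteristic with dim(L_3) = dim(L_5) = 1, and let y span C_{L_1}(L_2), extended to a basis x, y of L_1. Then [y x x x y] = 0. -/
open Module

section Aux

variable {F : Type*} {L : Type*} [Field F] [LieRing L] [LieAlgebra F L]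

/-- Auxiliary filtration generated by `C 1` under bracketing. -/
def ddSeq (C1 : Submodule F L) : ℕ → Submodule F L
  | 0 => ⊥
  | 1 => C1
  | (n+2) => Submodule.span F {w : L | ∃ u ∈ ddSeq C1 (n+1), ∃ a ∈ C1, w = ⁅u, a⁆}

theorem ddSeq_le {C : ℕ → Submodule F L}
    (hb : ∀ i j : ℕ, ∀ u ∈ C i, ∀ v ∈ C j, ⁅u, v⁆ ∈ C (i + j)) :
    ∀ n, ddSeq (C 1) n ≤ C n
  | 0 => bot_le
  | 1 => le_rfl
  | (n+2) => by
    apply Submodule.span_le.mpr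
    rintro t ⟨u, hu, a, ha, rfl⟩
    exact hb (n+1) 1 u (ddSeq_le hb (n+1) hu) a ha

theorem ddSeq_lie (C1 : Submodule F L) :
    ∀ j i : ℕ, ∀ u v : L, u ∈ ddSeq C1 i → v ∈ ddSeq C1 j →
      ⁅u, v⁆ ∈ ddSeq C1 (i + j) := by
  intro j
  induction j using Nat.strong_induction_on with
  | _ j ih =>
  match j with
  | 0 =>
    intro i u v hu hv
    have hv0 : v = 0 := by simpa [ddSeq] using hv
    simp [hv0]
  | 1 =>
    intro i u v hu hv
    match i with
    | 0 =>
      have hu0 : u = 0 := by simpa [ddSeq] using hu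
      simp [hu0]
    | (k+1) =>
      exact Submodule.subset_span ⟨u, hu, v, hv, rfl⟩
  | (n+2) =>
    intro i u v hu hv
    have hv' : v ∈ Submodule.span F {w : L | ∃ u ∈ ddSeq C1 (n+1), ∃ a ∈ C1, w = ⁅u, a⁆} := hv
    refine Submodule.span_induction
      (p := fun t _ => ⁅u, t⁆ ∈ ddSeq C1 (i + (n+2))) ?_ ?_ ?_ ?_ hv'
    · rintro t ⟨u', hu', a, ha, rfl⟩
      rw [leibniz_lie]
      apply add_mem
      · have h1 : ⁅u, u'⁆ ∈ ddSeq C1 (i + (n+1)) :=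
          ih (n+1) (by omega) i u u' hu hu'
        have h2 : ⁅⁅u, u'⁆, a⁆ ∈ ddSeq C1 (i + (n+1) + 1) :=
          ih 1 (by omega) (i + (n+1)) _ a h1 ha
        have he : i + (n+1) + 1 = i + (n+2) := by omega
        rwa [he] at h2
      · have h2 : ⁅u, a⁆ ∈ ddSeq C1 (i + 1) := ih 1 (by omega) i u a hu ha
        have h3 : ⁅⁅u, a⁆, u'⁆ ∈ ddSeq C1 (i + 1 + (n+1)) :=
          ih (n+1) (by omega) (i+1) _ u' h2 hu'
        have h4 : ⁅u', ⁅u, a⁆⁆ = -⁅⁅u, a⁆, u'⁆ := (lie_skew u' ⁅u, a⁆).symm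
        have he : i + 1 + (n+1) = i + (n+2) := by omega
        rw [h4]
        exact neg_mem (he ▸ h3)
    · simp
    · intro a b _ _ ha hb
      rw [lie_add]; exact add_mem ha hb
    · intro c t _ ht
      rw [lie_smul]; exact Submodule.smul_mem _ _ ht

end Aux

/-- With `dim L₃ = dim L₅ = 1`, one has `[yxxxy] = 0`. -/
theorem thin_yxxxy {F L : Type*} [Field F] [LieRing L] [LieAlgebra F L]
    (hp : ringChar F ≠ 0) (h2 : ringChar F ≠ 2)
    {C : ℕ → Submodule F L} (hthin : IsThinGraded F L C)
    (h3 : Module.finrank F (C 3) = 1)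
    {y : L} (hy1 : y ∈ C 1) (hy0 : y ≠ 0) (hyc : ∀ v ∈ C 2, ⁅y, v⁆ = 0)
    (h5 : Module.finrank F (C 5) = 1)
    {x : L} (hx1 : x ∈ C 1) (hbasis : Submodule.span F {x, y} = C 1) :
    ⁅⁅⁅⁅y, x⁆, x⁆, x⁆, y⁆ = 0 := by
  by_contra hw0
  set v1 : L := ⁅y, x⁆ with hv1d
  set v2 : L := ⁅v1, x⁆ with hv2d
  set v3 : L := ⁅v2, x⁆ with hv3d
  set w : L := ⁅v3, y⁆ with hwd
  set v4 : L := ⁅v3, x⁆ with hv4d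
  -- memberships
  have hv1m : v1 ∈ C 2 := hthin.bracket_mem 1 1 y hy1 x hx1
  have hv2m : v2 ∈ C 3 := hthin.bracket_mem 2 1 v1 hv1m x hx1
  have hv3m : v3 ∈ C 4 := hthin.bracket_mem 3 1 v2 hv2m x hx1
  have hwm : w ∈ C 5 := hthin.bracket_mem 4 1 v3 hv3m y hy1
  have hv4m : v4 ∈ C 5 := hthin.bracket_mem 4 1 v3 hv3m x hx1
  -- basic identities
  have h1 : ⁅y, v1⁆ = 0 := hyc v1 hv1m
  have hxy : ⁅x, y⁆ = -v1 := by rw [hv1d]; exact (lie_skew x y).symm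
  have hv1y : ⁅v1, y⁆ = 0 := by rw [← lie_skew v1 y, h1, neg_zero]
  have hv2y : ⁅v2, y⁆ = 0 := by
    rw [hv2d, lie_lie, hv1y, lie_zero, sub_zero, hxy, lie_neg, lie_self, neg_zero]
  have hwv : w = -⁅v2, v1⁆ := by
    rw [hwd, hv3d, lie_lie, hv2y, lie_zero, sub_zero, hxy, lie_neg]
  have hwy : ⁅w, y⁆ = 0 := by
    rw [hwv, neg_lie, lie_lie, hv1y, hv2y, lie_zero, lie_zero, sub_zero, neg_zero]
  have hv2v1 : ⁅v2, v1⁆ = -w := by rw [hwv, neg_neg]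
  have hv3v1 : ⁅v3, v1⁆ = -⁅w, x⁆ := by
    have hxv1 : ⁅x, v1⁆ = -v2 := by rw [hv2d]; exact (lie_skew x v1).symm
    have hxw : ⁅x, w⁆ = -⁅w, x⁆ := (lie_skew x w).symm
    rw [hv3d, lie_lie, hxv1, lie_neg, lie_self, neg_zero, zero_sub, hv2v1, lie_neg,
      neg_neg, hxw]
  have hv4y : ⁅v4, y⁆ = ⁅w, x⁆ + ⁅w, x⁆ := by
    have hxw : ⁅x, w⁆ = -⁅w, x⁆ := (lie_skew x w).symm
    rw [hv4d, lie_lie, ← hwd, hxy, lie_neg, hv3v1, neg_neg, hxw, sub_neg_eq_add]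
  -- v4 is a multiple of w
  have hW0 : (⟨w, hwm⟩ : C 5) ≠ 0 := by
    simpa [Submodule.mk_eq_zero] using hw0
  obtain ⟨c, hc⟩ := (finrank_eq_one_iff_of_nonzero' (⟨w, hwm⟩ : C 5) hW0).mp h5 ⟨v4, hv4m⟩
  have hcv : c • w = v4 := by simpa using congrArg Subtype.val hc
  have hwx : ⁅w, x⁆ = 0 := by
    have h0 : ⁅v4, y⁆ = 0 := by rw [← hcv, smul_lie, hwy, smul_zero]
    have hsum : ⁅w, x⁆ + ⁅w, x⁆ = 0 := by rw [← hv4y, h0]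
    have h2s : (2 : F) • ⁅w, x⁆ = 0 := by rw [two_smul]; exact hsum
    rcases smul_eq_zero.mp h2s with h | h
    · exact absurd h (Ring.two_ne_zero h2)
    · exact h
  -- every bracket of w with C 1 vanishes
  have hall : ∀ a ∈ C 1, ⁅w, a⁆ = 0 := by
    intro a ha
    rw [← hbasis] at ha
    obtain ⟨c1, c2, h⟩ := Submodule.mem_span_pair.mp ha
    rw [← h, lie_add, lie_smul, lie_smul, hwx, hwy, smul_zero, smul_zero, add_zero]
  have hC6 : C 6 = ⊥ := by
    rw [← hthin.covering 5 w hwm hw0]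
    rw [Submodule.span_eq_bot]
    rintro t ⟨a, ha, rfl⟩
    exact hall a ha
  -- finite-dimensionality of C 1 .. C 5
  haveI f1 : FiniteDimensional F (C 1) :=
    FiniteDimensional.of_finrank_pos (by rw [hthin.dim_one]; norm_num)
  haveI f3 : FiniteDimensional F (C 3) :=
    FiniteDimensional.of_finrank_pos (by rw [h3]; norm_num)
  haveI f5 : FiniteDimensional F (C 5) :=
    FiniteDimensional.of_finrank_pos (by rw [h5]; norm_num)
  have hstep : ∀ i : ℕ, C i ≠ ⊥ → FiniteDimensional F (C (i+1)) := by
    intro i hne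
    obtain ⟨z, hz, hz0⟩ := (Submodule.ne_bot_iff _).mp hne
    have hle : C (i+1) ≤ Submodule.span F {⁅z, x⁆, ⁅z, y⁆} := by
      rw [← hthin.covering i z hz hz0]
      apply Submodule.span_le.mpr
      rintro t ⟨a, ha, rfl⟩
      rw [← hbasis] at ha
      obtain ⟨c1, c2, h⟩ := Submodule.mem_span_pair.mp ha
      rw [← h, lie_add, lie_smul, lie_smul]
      exact Submodule.add_mem _
        (Submodule.smul_mem _ _ (Submodule.subset_span (by simp)))
        (Submodule.smul_mem _ _ (Submodule.subset_span (by simp)))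
    haveI : FiniteDimensional F (Submodule.span F ({⁅z, x⁆, ⁅z, y⁆} : Set L)) :=
      FiniteDimensional.span_of_finite F (Set.toFinite _)
    exact Submodule.finiteDimensional_of_le hle
  have hC1ne : C 1 ≠ ⊥ := by
    intro h
    have := hthin.dim_one
    rw [h, finrank_bot] at this
    norm_num at this
  have hC3ne : C 3 ≠ ⊥ := by
    intro h
    have := h3
    rw [h, finrank_bot] at this
    norm_num at this
  haveI f2 : FiniteDimensional F (C 2) := hstep 1 hC1ne
  haveI f4 : FiniteDimensional F (C 4) := hstep 3 hC3ne
  -- the sup of the generated filtration is everything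
  have hdle := ddSeq_le hthin.bracket_mem
  have hddbot : ∀ n, 6 ≤ n → ddSeq (C 1) n = ⊥ := by
    intro n hn
    induction n with
    | zero => omega
    | succ m ihm =>
      rcases Nat.lt_or_ge m 6 with h | h
      · have hm : m = 5 := by omega
        subst hm
        exact le_bot_iff.mp (hC6 ▸ hdle 6)
      · have hb := ihm h
        obtain ⟨k, rfl⟩ : ∃ k, m = k + 1 := ⟨m - 1, by omega⟩
        apply le_bot_iff.mp
        show Submodule.span F {t : L | ∃ u ∈ ddSeq (C 1) (k+1), ∃ a ∈ C 1, t = ⁅u, a⁆} ≤ ⊥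
        apply Submodule.span_le.mpr
        rintro t ⟨u, hu, a, ha, rfl⟩
        rw [hb] at hu
        simp only [Submodule.mem_bot] at hu
        simp [hu]
  have hSC : ∀ n, ddSeq (C 1) n ≤ C 1 ⊔ C 2 ⊔ C 3 ⊔ C 4 ⊔ C 5 := by
    have t1 : C 1 ≤ C 1 ⊔ C 2 ⊔ C 3 ⊔ C 4 ⊔ C 5 :=
      le_sup_of_le_left (le_sup_of_le_left (le_sup_of_le_left le_sup_left))
    have t2 : C 2 ≤ C 1 ⊔ C 2 ⊔ C 3 ⊔ C 4 ⊔ C 5 :=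
      le_sup_of_le_left (le_sup_of_le_left (le_sup_of_le_left le_sup_right))
    have t3 : C 3 ≤ C 1 ⊔ C 2 ⊔ C 3 ⊔ C 4 ⊔ C 5 :=
      le_sup_of_le_left (le_sup_of_le_left le_sup_right)
    have t4 : C 4 ≤ C 1 ⊔ C 2 ⊔ C 3 ⊔ C 4 ⊔ C 5 := le_sup_of_le_left le_sup_right
    have t5 : C 5 ≤ C 1 ⊔ C 2 ⊔ C 3 ⊔ C 4 ⊔ C 5 := le_sup_right
    intro n
    match n with
    | 0 => exact bot_le
    | 1 => exact le_trans (hdle 1) t1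
    | 2 => exact le_trans (hdle 2) t2
    | 3 => exact le_trans (hdle 3) t3
    | 4 => exact le_trans (hdle 4) t4
    | 5 => exact le_trans (hdle 5) t5
    | (m+6) => rw [hddbot (m+6) (by omega)]; exact bot_le
  have hlie : ∀ {a b : L}, a ∈ (⨆ n, ddSeq (C 1) n) → b ∈ (⨆ n, ddSeq (C 1) n) →
      ⁅a, b⁆ ∈ (⨆ n, ddSeq (C 1) n) := by
    intro a b ha hb
    refine Submodule.iSup_induction (ddSeq (C 1)) (motive := fun t => ⁅t, b⁆ ∈ (⨆ n, ddSeq (C 1) n))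
      ha ?_ (by simp) ?_
    · intro i t ht
      refine Submodule.iSup_induction (ddSeq (C 1)) (motive := fun s => ⁅t, s⁆ ∈ (⨆ n, ddSeq (C 1) n))
        hb ?_ (by simp) ?_
      · intro j s hs
        exact le_iSup (ddSeq (C 1)) (i + j) (ddSeq_lie (C 1) j i t s ht hs)
      · intro s s' hs hs'
        rw [lie_add]; exact add_mem hs hs'
    · intro t t' ht ht'
      rw [add_lie]; exact add_mem ht ht'
  let S : LieSubalgebra F L :=
    { (⨆ n, ddSeq (C 1) n : Submodule F L) with
      lie_mem' := fun ha hb => hlie ha hb }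
  have hCS : LieSubalgebra.lieSpan F L ((C 1 : Submodule F L) : Set L) ≤ S :=
    LieSubalgebra.lieSpan_le.mpr (fun a ha => le_iSup (ddSeq (C 1)) 1 ha)
  rw [hthin.generates] at hCS
  have hStop : (⨆ n, ddSeq (C 1) n) = (⊤ : Submodule F L) := by
    apply top_unique
    intro t _
    exact hCS (LieSubalgebra.mem_top t)
  have hTtop : (⊤ : Submodule F L) ≤ C 1 ⊔ C 2 ⊔ C 3 ⊔ C 4 ⊔ C 5 := by
    rw [← hStop]; exact iSup_le hSC
  haveI : FiniteDimensional F (⊤ : Submodule F L) :=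
    Submodule.finiteDimensional_of_le hTtop
  exact hthin.infinite_dim (Module.Finite.equiv Submodule.topEquiv)
end

section
/- Let L be a thin Lie algebra over a field of odd characteristic with dim(L_3) = 1 and dim(L_5) = 1, and let y span C_{L_1}(L_2). Then [L y y] = 0, i.e. (ad y)^2 = 0 on L, so y is a sandwich element. -/
open Module

section ThinAux

variable {F : Type*} {L : Type*} [Field F] [LieRing L] [LieAlgebra F L]

private lemma jswap (A B Cc : L) : ⁅⁅A, B⁆, Cc⁆ = ⁅⁅A, Cc⁆, B⁆ + ⁅A, ⁅B, Cc⁆⁆ := by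
  have h1 : ⁅A, ⁅B, Cc⁆⁆ = ⁅⁅A, B⁆, Cc⁆ + ⁅B, ⁅A, Cc⁆⁆ := leibniz_lie A B Cc
  have h2 : ⁅B, ⁅A, Cc⁆⁆ = -⁅⁅A, Cc⁆, B⁆ := (lie_skew B ⁅A, Cc⁆).symm
  rw [h2] at h1
  rw [h1]
  abel

/-- Left-normed bracket filtration generated by `C1`. -/
private def Bgen (C1 : Submodule F L) : ℕ → Submodule F L
  | 0 => ⊥
  | 1 => C1
  | (n+2) => Submodule.span F {w : L | ∃ zz ∈ Bgen C1 (n+1), ∃ a ∈ C1, w = ⁅zz, a⁆}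

private lemma bgen_bracket {C1 : Submodule F L} {n : ℕ} (hn : 1 ≤ n) {u a : L}
    (hu : u ∈ Bgen C1 n) (ha : a ∈ C1) : ⁅u, a⁆ ∈ Bgen C1 (n+1) := by
  obtain ⟨m, rfl⟩ : ∃ m, n = m + 1 := ⟨n - 1, by omega⟩
  exact Submodule.subset_span ⟨u, hu, a, ha, rfl⟩

private lemma bgen_lie_c1 {C1 : Submodule F L} {a : L} (ha : a ∈ C1) {u : L}
    (hu : u ∈ ⨆ n, Bgen C1 n) : ⁅u, a⁆ ∈ ⨆ n, Bgen C1 n := by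
  let f : L →ₗ[F] L :=
    { toFun := fun z => ⁅z, a⁆
      map_add' := fun p q => add_lie p q a
      map_smul' := fun c p => by simp }
  have hle : (⨆ n, Bgen C1 n) ≤ Submodule.comap f (⨆ n, Bgen C1 n) := by
    refine iSup_le fun n => ?_
    match n with
    | 0 =>
      intro z hz
      have hz0 : z = 0 := by simpa [Bgen] using hz
      simp [hz0, f, Submodule.mem_comap]
    | (i+1) =>
      intro z hz
      exact Submodule.mem_comap.mpr
        (Submodule.mem_iSup_of_mem (i+2) (bgen_bracket (by omega) hz ha))
  exact hle hu

private lemma bgen_lie_mem {C1 : Submodule F L} :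
    ∀ (k j : ℕ) (u : L), u ∈ Bgen C1 j → ∀ vv ∈ Bgen C1 k,
      ⁅u, vv⁆ ∈ ⨆ n, Bgen C1 n := by
  intro k
  induction k using Nat.strong_induction_on with
  | _ k IH =>
    match k with
    | 0 =>
      intro j u _ vv hv
      have hvv : vv = 0 := by simpa [Bgen] using hv
      simp [hvv]
    | 1 =>
      intro j u hu vv hv
      match j with
      | 0 =>
        have hu0 : u = 0 := by simpa [Bgen] using hu
        simp [hu0]
      | (i+1) =>
        exact Submodule.mem_iSup_of_mem (i+2) (bgen_bracket (by omega) hu hv)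
    | (n+2) =>
      intro j u hu vv hv
      have hv' : vv ∈ Submodule.span F
          {w : L | ∃ zz ∈ Bgen C1 (n+1), ∃ a ∈ C1, w = ⁅zz, a⁆} := hv
      clear hv
      induction hv' using Submodule.span_induction with
      | mem w hw =>
        obtain ⟨zz, hzz, a, ha, rfl⟩ := hw
        rw [leibniz_lie]
        refine Submodule.add_mem _ ?_ ?_
        · exact bgen_lie_c1 ha (IH (n+1) (by omega) j u hu zz hzz)
        · match j with
          | 0 =>
            have hu0 : u = 0 := by simpa [Bgen] using hu
            simp [hu0]
          | (i+1) =>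
            have h1 : ⁅u, a⁆ ∈ Bgen C1 (i+2) := bgen_bracket (by omega) hu ha
            have h2 := IH (n+1) (by omega) (i+2) ⁅u, a⁆ h1 zz hzz
            have h3 : ⁅zz, ⁅u, a⁆⁆ = -⁅⁅u, a⁆, zz⁆ := (lie_skew zz ⁅u, a⁆).symm
            rw [h3]
            exact Submodule.neg_mem _ h2
      | zero => simp
      | add p q hp hq ihp ihq =>
        rw [lie_add]
        exact Submodule.add_mem _ ihp ihq
      | smul c p hp ihp =>
        rw [lie_smul]
        exact Submodule.smul_mem _ _ ihp

private lemma bgen_le {C : ℕ → Submodule F L} (hthin : IsThinGraded F L C) :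
    ∀ n, Bgen (C 1) n ≤ C n
  | 0 => by rw [hthin.zero_bot]; exact le_rfl
  | 1 => le_rfl
  | (n+2) => by
      refine Submodule.span_le.mpr ?_
      rintro w ⟨zz, hzz, a, ha, rfl⟩
      exact hthin.bracket_mem (n+1) 1 zz (bgen_le hthin (n+1) hzz) a ha

private lemma bgen_sup_eq_top {C : ℕ → Submodule F L} (hthin : IsThinGraded F L C) :
    (⨆ n, Bgen (C 1) n) = ⊤ := by
  have hlie : ∀ p ∈ (⨆ n, Bgen (C 1) n), ∀ q ∈ (⨆ n, Bgen (C 1) n),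
      ⁅p, q⁆ ∈ (⨆ n, Bgen (C 1) n) := by
    intro p hp q hq
    have inner : ∀ j, ∀ u ∈ Bgen (C 1) j, ∀ q' ∈ (⨆ n, Bgen (C 1) n),
        ⁅u, q'⁆ ∈ (⨆ n, Bgen (C 1) n) := by
      intro j u hu q' hq'
      let f : L →ₗ[F] L :=
        { toFun := fun z => ⁅u, z⁆
          map_add' := fun a b => lie_add u a b
          map_smul' := fun c a => by simp }
      have hle : (⨆ n, Bgen (C 1) n) ≤ Submodule.comap f (⨆ n, Bgen (C 1) n) :=
        iSup_le fun k z hz => Submodule.mem_comap.mpr (bgen_lie_mem k j u hu z hz)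
      exact hle hq'
    let g : L →ₗ[F] L :=
      { toFun := fun z => ⁅z, q⁆
        map_add' := fun a b => add_lie a b q
        map_smul' := fun c a => by simp }
    have hle : (⨆ n, Bgen (C 1) n) ≤ Submodule.comap g (⨆ n, Bgen (C 1) n) :=
      iSup_le fun j u hu => Submodule.mem_comap.mpr (inner j u hu q hq)
    exact hle hp
  let K : LieSubalgebra F L :=
    { toSubmodule := ⨆ n, Bgen (C 1) n
      lie_mem' := fun {p q} hp hq => hlie p hp q hq }
  have h1 : ((C 1 : Submodule F L) : Set L) ⊆ K := fun z hz =>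
    Submodule.mem_iSup_of_mem 1 (by exact hz)
  have h2 : (⊤ : LieSubalgebra F L) ≤ K := by
    rw [← hthin.generates]
    exact LieSubalgebra.lieSpan_le.mpr h1
  refine le_antisymm le_top fun z _ => ?_
  exact h2 (LieSubalgebra.mem_top z)

private lemma C_le_bgen {C : ℕ → Submodule F L} (hthin : IsThinGraded F L C) (m : ℕ) :
    C m ≤ Bgen (C 1) m := by
  classical
  intro z hz
  have hz' : z ∈ ⨆ n, Bgen (C 1) n := by
    rw [bgen_sup_eq_top hthin]; exact Submodule.mem_top
  obtain ⟨f, hf, hsum⟩ := (Submodule.mem_iSup_iff_exists_finsupp _ _).mp hz'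
  have hfC : ∀ i, f i ∈ C i := fun i => bgen_le hthin i (hf i)
  have hdiff : z - f m = ∑ i ∈ f.support.erase m, f i := by
    by_cases hm : m ∈ f.support
    · have h1 : f m + ∑ i ∈ f.support.erase m, f i = ∑ i ∈ f.support, f i :=
        Finset.add_sum_erase _ _ hm
      have h2 : (f.sum fun _ xi => xi) = ∑ i ∈ f.support, f i := rfl
      rw [← hsum, h2, ← h1]
      abel
    · have h0 : f m = 0 := Finsupp.notMem_support_iff.mp hm
      have h2 : (f.sum fun _ xi => xi) = ∑ i ∈ f.support, f i := rfl
      rw [← hsum, h2, h0, sub_zero, Finset.erase_eq_of_notMem hm]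
  have hrest : z - f m ∈ ⨆ (j) (_ : j ≠ m), C j := by
    rw [hdiff]
    refine Submodule.sum_mem _ fun i hi => ?_
    have hne : i ≠ m := Finset.ne_of_mem_erase hi
    exact Submodule.mem_iSup_of_mem i (Submodule.mem_iSup_of_mem hne (hfC i))
  have hdisj := hthin.internal.submodule_iSupIndep m
  have hboth : z - f m ∈ C m ⊓ ⨆ (j) (_ : j ≠ m), C j :=
    Submodule.mem_inf.mpr ⟨Submodule.sub_mem _ hz (hfC m), hrest⟩
  rw [disjoint_iff.mp hdisj] at hboth
  have hzf : z = f m := by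
    have := (Submodule.mem_bot F).mp hboth
    rwa [sub_eq_zero] at this
  rw [hzf]
  exact hf m

end ThinAux

/-- Main theorem in odd characteristic: in a thin Lie algebra with
`dim L₃ = dim L₅ = 1`, the element `y` spanning `C_{L₁}(L₂)` satisfies
`(ad y)² = 0`, i.e. `y` is a sandwich element. -/
theorem thin_sandwich_odd {F L : Type*} [Field F] [LieRing L] [LieAlgebra F L]
    (hp : ringChar F ≠ 0) (h2 : ringChar F ≠ 2)
    {C : ℕ → Submodule F L} (hthin : IsThinGraded F L C)
    (h3 : Module.finrank F (C 3) = 1)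
    {y : L} (hy1 : y ∈ C 1) (hy0 : y ≠ 0) (hyc : ∀ v ∈ C 2, ⁅y, v⁆ = 0)
    (h5 : Module.finrank F (C 5) = 1) :
    ∀ z : L, ⁅⁅z, y⁆, y⁆ = 0 := by
  classical
  -- basic scalar helpers
  have two0 : (2 : F) ≠ 0 := Ring.two_ne_zero h2
  have smul_cancel : ∀ (c : F) (z : L), c ≠ 0 → c • z = 0 → z = 0 := by
    intro c z hc h
    have := congrArg (fun z' : L => c⁻¹ • z') h
    simpa [smul_smul, inv_mul_cancel₀ hc] using this
  have half : ∀ a : L, a + a = 0 → a = 0 := by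
    intro a h
    refine smul_cancel (2 : F) a two0 ?_
    rw [two_smul]; exact h
  have castC : ∀ {a b : ℕ}, a = b → ∀ {z : L}, z ∈ C a → z ∈ C b := by
    rintro a b rfl z h; exact h
  have bm : ∀ (i j : ℕ) {u v' : L}, u ∈ C i → v' ∈ C j → ⁅u, v'⁆ ∈ C (i + j) :=
    fun i j {u v'} hu hv => hthin.bracket_mem i j u hu v' hv
  -- a second basis vector x for C 1
  obtain ⟨x, hx1, hrep⟩ : ∃ x ∈ C 1, ∀ a ∈ C 1, ∃ c₁ c₂ : F, a = c₁ • x + c₂ • y := by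
    haveI fd1 : FiniteDimensional F (C 1) :=
      Module.finite_of_finrank_pos (by rw [hthin.dim_one]; norm_num)
    have hyle : (F ∙ y) ≤ C 1 := by rwa [Submodule.span_singleton_le_iff_mem]
    have hyne : (F ∙ y) ≠ C 1 := by
      intro h
      have h1 : finrank F (F ∙ y) = 1 := finrank_span_singleton hy0
      rw [h, hthin.dim_one] at h1
      omega
    obtain ⟨x, hx1, hxy⟩ : ∃ x ∈ C 1, x ∉ (F ∙ y) := by
      by_contra hcon
      push_neg at hcon
      exact hyne (le_antisymm hyle hcon)
    refine ⟨x, hx1, ?_⟩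
    have hle2 : Submodule.span F {x, y} ≤ C 1 := by
      rw [Submodule.span_le]
      rintro z (rfl | rfl) <;> assumption
    haveI : FiniteDimensional F (Submodule.span F {x, y}) :=
      FiniteDimensional.span_of_finite F (Set.toFinite _)
    have hlt : (F ∙ y) < Submodule.span F {x, y} := by
      refine lt_of_le_of_ne (Submodule.span_mono (by simp)) ?_
      intro h
      exact hxy (h ▸ Submodule.subset_span (by simp))
    have h1 : finrank F (F ∙ y) = 1 := finrank_span_singleton hy0
    have h2' : 2 ≤ finrank F (Submodule.span F {x, y}) := by
      have := Submodule.finrank_lt_finrank_of_lt hlt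
      omega
    have heq : Submodule.span F {x, y} = C 1 :=
      Submodule.eq_of_le_of_finrank_le hle2 (by rw [hthin.dim_one]; exact h2')
    intro a ha
    rw [← heq] at ha
    obtain ⟨c₁, c₂, hc⟩ := Submodule.mem_span_pair.mp ha
    exact ⟨c₁, c₂, hc.symm⟩
  -- the covering property via the pair x, y
  have cov : ∀ (i : ℕ) (z : L), z ∈ C i → z ≠ 0 → ∀ c ∈ C (i+1),
      ∃ a b : F, c = a • ⁅z, x⁆ + b • ⁅z, y⁆ := by
    intro i z hzC hz0 c hc
    rw [← hthin.covering i z hzC hz0] at hc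
    induction hc using Submodule.span_induction with
    | mem w hw =>
      obtain ⟨aa, haa, rfl⟩ := hw
      obtain ⟨c₁, c₂, rfl⟩ := hrep aa haa
      exact ⟨c₁, c₂, by rw [lie_add, lie_smul, lie_smul]⟩
    | zero => exact ⟨0, 0, by simp⟩
    | add p q hp hq ihp ihq =>
      obtain ⟨a₁, b₁, rfl⟩ := ihp
      obtain ⟨a₂, b₂, rfl⟩ := ihq
      exact ⟨a₁ + a₂, b₁ + b₂, by rw [add_smul, add_smul]; abel⟩
    | smul c' p hp ihp =>
      obtain ⟨a₁, b₁, rfl⟩ := ihp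
      exact ⟨c' * a₁, c' * b₁, by rw [smul_add, smul_smul, smul_smul]⟩
  -- bottom propagation and nontriviality
  have cbot : ∀ i : ℕ, 1 ≤ i → C i = ⊥ → C (i+1) = ⊥ := by
    intro i hi hbot
    obtain ⟨i', rfl⟩ : ∃ i', i = i' + 1 := ⟨i - 1, by omega⟩
    refine le_bot_iff.mp (le_trans (C_le_bgen hthin (i'+2)) ?_)
    refine Submodule.span_le.mpr ?_
    rintro w ⟨zz, hzz, a, ha, rfl⟩
    have h1 : zz ∈ (⊥ : Submodule F L) := hbot ▸ (bgen_le hthin (i'+1) hzz)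
    have hz0 : zz = 0 := by simpa using h1
    simp [hz0]
  have cfd : ∀ i : ℕ, FiniteDimensional F (C i) := by
    intro i
    induction i with
    | zero =>
      rw [hthin.zero_bot]
      infer_instance
    | succ i ih =>
      rcases Nat.eq_zero_or_pos i with rfl | hip
      · exact Module.finite_of_finrank_pos (by rw [hthin.dim_one]; norm_num)
      · by_cases hb : C i = ⊥
        · rw [cbot i hip hb]
          infer_instance
        · obtain ⟨z, hzC, hz0⟩ := (Submodule.ne_bot_iff _).mp hb
          have hle : C (i+1) ≤ Submodule.span F {⁅z, x⁆, ⁅z, y⁆} := by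
            intro c hc
            obtain ⟨a, b, rfl⟩ := cov i z hzC hz0 c hc
            exact Submodule.add_mem _
              (Submodule.smul_mem _ _ (Submodule.subset_span (by simp)))
              (Submodule.smul_mem _ _ (Submodule.subset_span (by simp)))
          haveI : FiniteDimensional F (Submodule.span F {⁅z, x⁆, ⁅z, y⁆}) :=
            FiniteDimensional.span_of_finite F (Set.toFinite _)
          exact Submodule.finiteDimensional_of_le hle
  have cne : ∀ i : ℕ, 1 ≤ i → ∃ z ∈ C i, z ≠ 0 := by
    intro i hi
    by_contra hcon
    push_neg at hcon
    have hbot : C i = ⊥ := (Submodule.eq_bot_iff _).mpr hcon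
    have hall : ∀ k, C (i + k) = ⊥ := by
      intro k
      induction k with
      | zero => simpa using hbot
      | succ k ihk =>
        have h1 := cbot (i+k) (by omega) ihk
        have h2 : i + k + 1 = i + (k + 1) := by omega
        rwa [h2] at h1
    have htople : (⊤ : Submodule F L) ≤ (Finset.range i).sup C := by
      rw [← hthin.internal.submodule_iSup_eq_top]
      refine iSup_le fun n => ?_
      by_cases hn : n < i
      · exact Finset.le_sup (Finset.mem_range.mpr hn)
      · have hCn : C n = ⊥ := by
          have h1 := hall (n - i)
          rwa [show i + (n - i) = n by omega] at h1
        rw [hCn]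
        exact bot_le
    haveI : ∀ j, FiniteDimensional F (C j) := cfd
    haveI hfdS : FiniteDimensional F ((Finset.range i).sup C : Submodule F L) :=
      Submodule.finiteDimensional_finset_sup _ _
    haveI : FiniteDimensional F (⊤ : Submodule F L) :=
      Submodule.finiteDimensional_of_le htople
    exact hthin.infinite_dim (Module.Finite.equiv (Submodule.topEquiv))
  -- small degree facts
  have hyx : ⁅y, x⁆ = -⁅x, y⁆ := by rw [← lie_skew]
  set v : L := ⁅x, y⁆ with hv_def
  have hv2 : v ∈ C 2 := castC (by norm_num) (bm 1 1 hx1 hy1)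
  have hyv : ⁅y, v⁆ = 0 := hyc v hv2
  have hvy : ⁅v, y⁆ = 0 := by rw [← lie_skew, hyv, neg_zero]
  set w : L := ⁅v, x⁆ with hw_def
  have hw3 : w ∈ C 3 := castC (by norm_num) (bm 2 1 hv2 hx1)
  have hwy : ⁅w, y⁆ = 0 := by
    rw [hw_def, jswap, hvy, zero_lie, ← hv_def, lie_self, zero_add]
  set t : L := ⁅w, x⁆ with ht_def
  have ht4 : t ∈ C 4 := castC (by norm_num) (bm 3 1 hw3 hx1)
  set sb : L := ⁅w, v⁆ with hsb_def
  have hsb5 : sb ∈ C 5 := castC (by norm_num) (bm 3 2 hw3 hv2)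
  have hty : ⁅t, y⁆ = sb := by
    rw [ht_def, jswap, hwy, zero_lie, ← hv_def, zero_add, ← hsb_def]
  have hsby : ⁅sb, y⁆ = 0 := by
    rw [hsb_def, jswap, hwy, zero_lie, hvy, lie_zero, add_zero]
  have hxv : ⁅x, v⁆ = -w := by rw [hw_def, ← lie_skew]
  have htv : ⁅t, v⁆ = ⁅sb, x⁆ := by
    rw [ht_def, jswap, hxv, lie_neg, lie_self, neg_zero, add_zero, ← hsb_def]
  set rb : L := ⁅t, x⁆ with hrb_def
  have hrb5 : rb ∈ C 5 := castC (by norm_num) (bm 4 1 ht4 hx1)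
  have hrby : ⁅rb, y⁆ = ⁅sb, x⁆ + ⁅sb, x⁆ := by
    rw [hrb_def, jswap, hty, ← hv_def, htv]
  -- sb = 0 (this is where dim L5 = 1 is used)
  have hsb0 : sb = 0 := by
    by_contra hne
    haveI := cfd 5
    have hspan : (F ∙ sb) = C 5 := by
      apply Submodule.eq_of_le_of_finrank_le
      · rwa [Submodule.span_singleton_le_iff_mem]
      · rw [h5, finrank_span_singleton hne]
    have hrbmem : rb ∈ (F ∙ sb) := by rw [hspan]; exact hrb5
    obtain ⟨lam, hlam⟩ := Submodule.mem_span_singleton.mp hrbmem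
    have h0 : ⁅rb, y⁆ = 0 := by rw [← hlam, smul_lie, hsby, smul_zero]
    have hsbx : ⁅sb, x⁆ = 0 := half _ (by rw [← hrby, h0])
    obtain ⟨z6, hz6, hz60⟩ := cne 6 (by norm_num)
    obtain ⟨a, b, hab⟩ := cov 5 sb hsb5 hne z6 (castC (by norm_num) hz6)
    exact hz60 (by rw [hab, hsbx, hsby, smul_zero, smul_zero, add_zero])
  have hwv : ⁅w, v⁆ = 0 := by rw [← hsb_def]; exact hsb0
  have hty0 : ⁅t, y⁆ = 0 := by rw [hty, hsb0]
  have htv0 : ⁅t, v⁆ = 0 := by rw [htv, hsb0, zero_lie]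
  have hrby0 : ⁅rb, y⁆ = 0 := by rw [hrby, hsb0, zero_lie, add_zero]
  -- y centralizes C 2, ..., C 5
  have hv0 : v ≠ 0 := by
    obtain ⟨z2, hz2, hz20⟩ := cne 2 (by norm_num)
    intro hv00
    obtain ⟨a, b, hab⟩ := cov 1 y hy1 hy0 z2 (castC (by norm_num) hz2)
    refine hz20 ?_
    rw [hab, hyx, hv00]
    simp
  have yc2 : ∀ z ∈ C 2, ⁅z, y⁆ = 0 := by
    intro z hz
    obtain ⟨a, b, rfl⟩ := cov 1 y hy1 hy0 z (castC (by norm_num) hz)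
    rw [hyx]
    simp [add_lie, smul_lie, hvy, neg_lie, lie_self]
  have hw0 : w ≠ 0 := by
    obtain ⟨z3, hz3, hz30⟩ := cne 3 (by norm_num)
    intro hw00
    obtain ⟨a, b, hab⟩ := cov 2 v hv2 hv0 z3 (castC (by norm_num) hz3)
    refine hz30 ?_
    rw [hab, ← hw_def, hw00, hvy]
    simp
  have yc3 : ∀ z ∈ C 3, ⁅z, y⁆ = 0 := by
    intro z hz
    obtain ⟨a, b, rfl⟩ := cov 2 v hv2 hv0 z (castC (by norm_num) hz)
    rw [← hw_def, hvy]
    simp [add_lie, smul_lie, hwy]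
  have ht0 : t ≠ 0 := by
    obtain ⟨z4, hz4, hz40⟩ := cne 4 (by norm_num)
    intro ht00
    obtain ⟨a, b, hab⟩ := cov 3 w hw3 hw0 z4 (castC (by norm_num) hz4)
    refine hz40 ?_
    rw [hab, ← ht_def, ht00, hwy]
    simp
  have yc4 : ∀ z ∈ C 4, ⁅z, y⁆ = 0 := by
    intro z hz
    obtain ⟨a, b, rfl⟩ := cov 3 w hw3 hw0 z (castC (by norm_num) hz)
    rw [← ht_def, hwy]
    simp [add_lie, smul_lie, hty0]
  have yc5 : ∀ z ∈ C 5, ⁅z, y⁆ = 0 := by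
    intro z hz
    obtain ⟨a, b, rfl⟩ := cov 4 t ht4 ht0 z (castC (by norm_num) hz)
    rw [← hrb_def, hty0]
    simp [add_lie, smul_lie, hrby0]
  -- main simultaneous induction
  have main : ∀ n : ℕ, (∀ z ∈ C n, ⁅⁅z, y⁆, y⁆ = 0) ∧ (∀ z ∈ C n, ⁅⁅z, y⁆, v⁆ = 0) := by
    intro n
    induction n using Nat.strong_induction_on with
    | _ n IH =>
      have hA : ∀ z ∈ C n, ⁅⁅z, y⁆, y⁆ = 0 := by
        rcases n with _ | _ | m
        · intro z hz
          rw [hthin.zero_bot] at hz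
          have hz0 : z = 0 := by simpa using hz
          simp [hz0]
        · intro z hz
          obtain ⟨c₁, c₂, rfl⟩ := hrep z hz
          rw [add_lie, smul_lie, smul_lie, lie_self, smul_zero, add_zero, ← hv_def]
          rw [smul_lie, hvy, smul_zero]
        · intro z hz
          obtain ⟨u', hu', hu'0⟩ := cne (m+1) (by omega)
          obtain ⟨a, b, rfl⟩ := cov (m+1) u' hu' hu'0 z (castC (by omega) hz)
          have h1 : ⁅⁅u', y⁆, y⁆ = 0 := (IH (m+1) (by omega)).1 u' hu'
          have h2 : ⁅⁅u', y⁆, v⁆ = 0 := (IH (m+1) (by omega)).2 u' hu'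
          have hXy : ⁅⁅u', x⁆, y⁆ = ⁅⁅u', y⁆, x⁆ + ⁅u', v⁆ := by rw [jswap, ← hv_def]
          have e1 : ⁅⁅⁅u', y⁆, x⁆, y⁆ = 0 := by
            rw [jswap, h1, zero_lie, ← hv_def, h2, zero_add]
          have e2 : ⁅⁅u', v⁆, y⁆ = 0 := by
            rw [jswap, h2, hvy, lie_zero, add_zero]
          rw [add_lie, smul_lie, smul_lie, h1, smul_zero, add_zero, hXy]
          rw [smul_lie, add_lie, e1, e2]
          simp
      refine ⟨hA, ?_⟩
      rcases n with _ | _ | _ | _ | _ | _ | k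
      · intro z hz
        rw [hthin.zero_bot] at hz
        have hz0 : z = 0 := by simpa using hz
        simp [hz0]
      · intro z hz
        obtain ⟨c₁, c₂, rfl⟩ := hrep z hz
        rw [add_lie, smul_lie, smul_lie, lie_self, smul_zero, add_zero, ← hv_def]
        rw [smul_lie, lie_self, smul_zero]
      · intro z hz
        rw [yc2 z hz, zero_lie]
      · intro z hz
        rw [yc3 z hz, zero_lie]
      · intro z hz
        rw [yc4 z hz, zero_lie]
      · intro z hz
        rw [yc5 z hz, zero_lie]
      -- the main case  n = k + 6
      intro u hu
      by_contra σne
      set s : L := ⁅u, y⁆ with hs_def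
      have hs0 : s ≠ 0 := fun h => σne (by rw [h, zero_lie])
      have hu0 : u ≠ 0 := fun h => σne (by rw [hs_def, h, zero_lie, zero_lie])
      have hu6 : u ∈ C (k+6) := by
        have : (k+1+1+1+1+1+1) = k+6 := by omega
        rwa [this] at hu
      have hsC : s ∈ C (k+7) := castC (by omega) (bm (k+6) 1 hu6 hy1)
      have hA6 : ⁅s, y⁆ = 0 := hA u hu
      set e : L := ⁅s, x⁆ with he_def
      have heC : e ∈ C (k+8) := castC (by omega) (bm (k+7) 1 hsC hx1)
      have hey : ⁅e, y⁆ = ⁅s, v⁆ := by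
        rw [he_def, jswap, hA6, zero_lie, ← hv_def, zero_add]
      have he0 : e ≠ 0 := fun h => σne (by rw [← hey, h, zero_lie])
      -- [u, v] = e
      have huvC : ⁅u, v⁆ ∈ C (k+8) := castC (by omega) (bm (k+6) 2 hu6 hv2)
      obtain ⟨μ, b₀, hμ⟩ := cov (k+7) s hsC hs0 ⁅u, v⁆ (castC (by omega) huvC)
      rw [hA6, smul_zero, add_zero, ← he_def] at hμ
      have hσμ : ⁅s, v⁆ = μ • ⁅s, v⁆ := by
        have hh : ⁅s, v⁆ = ⁅⁅u, v⁆, y⁆ := by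
          rw [hs_def, jswap, hyv, lie_zero, add_zero]
        conv_lhs => rw [hh, hμ]
        rw [smul_lie, hey]
      have hμ1 : μ = 1 := by
        by_contra hμne
        have hzz : (1 - μ) • ⁅s, v⁆ = 0 := by
          rw [sub_smul, one_smul, ← hσμ, sub_self]
        exact σne (smul_cancel _ _ (sub_ne_zero.mpr (Ne.symm hμne)) hzz)
      rw [hμ1, one_smul] at hμ
      set mm : L := ⁅u, x⁆ with hmm_def
      have hmmC : mm ∈ C (k+7) := castC (by omega) (bm (k+6) 1 hu6 hx1)
      have hmy : ⁅mm, y⁆ = e + e := by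
        rw [hmm_def, jswap, ← hs_def, ← he_def, ← hv_def, hμ]
      have hee0 : e + e ≠ 0 := fun h => he0 (half e h)
      have hmns : ∀ c : F, mm ≠ c • s := by
        intro c hcc
        have hmy0 : ⁅mm, y⁆ = 0 := by rw [hcc, smul_lie, hA6, smul_zero]
        exact hee0 (by rw [← hmy, hmy0])
      -- step 7 : y kills C (k+5)
      have h7 : ∀ p ∈ C (k+5), ⁅p, y⁆ = 0 := by
        intro p hp
        by_cases hp0 : p = 0
        · rw [hp0, zero_lie]
        have hrC : ⁅p, y⁆ ∈ C (k+6) := castC (by omega) (bm (k+5) 1 hp hy1)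
        have hry : ⁅⁅p, y⁆, y⁆ = 0 := (IH (k+5) (by omega)).1 p hp
        have hrv : ⁅⁅p, y⁆, v⁆ = 0 := (IH (k+5) (by omega)).2 p hp
        have hpvC : ⁅p, v⁆ ∈ C (k+7) := castC (by omega) (bm (k+5) 2 hp hv2)
        obtain ⟨l₁, l₂, hl⟩ := cov (k+6) u hu6 hu0 ⁅p, v⁆ (castC (by omega) hpvC)
        rw [← hmm_def, ← hs_def] at hl
        have hpv_y : ⁅⁅p, v⁆, y⁆ = 0 := by
          rw [jswap, hrv, hvy, lie_zero, add_zero]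
        have hl1 : l₁ = 0 := by
          by_contra hl10
          have hh := hpv_y
          rw [hl, add_lie, smul_lie, smul_lie, hmy, hA6, smul_zero, add_zero] at hh
          exact hee0 (smul_cancel l₁ _ hl10 hh)
        rw [hl1, zero_smul, zero_add] at hl
        obtain ⟨α, β, hu_rep⟩ := cov (k+5) p hp hp0 u (castC (by omega) hu6)
        have hs_rep : s = α • (⁅⁅p, y⁆, x⁆ + ⁅p, v⁆) := by
          rw [hs_def, hu_rep, add_lie, smul_lie, smul_lie, hry, smul_zero, add_zero]
          rw [jswap, ← hv_def]
        have hα : α ≠ 0 := by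
          intro h0
          exact hs0 (by rw [hs_rep, h0, zero_smul])
        have hrx : ⁅⁅p, y⁆, x⁆ = (α⁻¹ - l₂) • s := by
          rw [hl] at hs_rep
          have hh2 : ⁅⁅p, y⁆, x⁆ + l₂ • s = α⁻¹ • s := by
            have hcg := congrArg (fun z' : L => α⁻¹ • z') hs_rep.symm
            simp only [smul_smul, inv_mul_cancel₀ hα, one_smul] at hcg
            exact hcg
          rw [sub_smul, ← hh2]
          abel
        by_contra hr0
        obtain ⟨a₂, b₂, hmm2⟩ := cov (k+6) ⁅p, y⁆ hrC hr0 mm (castC (by omega) hmmC)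
        rw [hry, smul_zero, add_zero, hrx, smul_smul] at hmm2
        exact hmns _ hmm2
      -- the element p₀ with [p₀, x] = u
      obtain ⟨p₁, hp₁, hp₁0⟩ := cne (k+5) (by omega)
      obtain ⟨α₁, β₁, hu1⟩ := cov (k+5) p₁ hp₁ hp₁0 u (castC (by omega) hu6)
      rw [h7 p₁ hp₁, smul_zero, add_zero] at hu1
      set p₀ : L := α₁ • p₁ with hp0_def
      have hp₀C : p₀ ∈ C (k+5) := Submodule.smul_mem _ _ hp₁
      have hp₀x : ⁅p₀, x⁆ = u := by rw [hp0_def, smul_lie, ← hu1]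
      have hp₀y : ⁅p₀, y⁆ = 0 := h7 p₀ hp₀C
      have hp₀0 : p₀ ≠ 0 := by
        intro h
        exact hu0 (by rw [← hp₀x, h, zero_lie])
      have hp₀v : ⁅p₀, v⁆ = s := by
        rw [hs_def, ← hp₀x, jswap, hp₀y, zero_lie, ← hv_def, zero_add]
      -- C (k+6) is spanned by u
      have hCn : ∀ ζ ∈ C (k+6), ∃ c : F, ζ = c • u := by
        intro ζ hζ
        obtain ⟨a, b, hζr⟩ := cov (k+5) p₀ hp₀C hp₀0 ζ (castC (by omega) hζ)
        rw [hp₀y, smul_zero, add_zero, hp₀x] at hζr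
        exact ⟨a, hζr⟩
      -- C (k+5) is spanned by p₀
      have hCn1 : ∀ ζ ∈ C (k+5), ∃ c : F, ζ = c • p₀ := by
        intro ζ hζ
        by_cases hζ0 : ζ = 0
        · exact ⟨0, by rw [hζ0, zero_smul]⟩
        obtain ⟨c', hc'⟩ := hCn ⁅ζ, x⁆ (castC (by omega) (bm (k+5) 1 hζ hx1))
        refine ⟨c', ?_⟩
        by_contra hζne
        have hηC : ζ - c' • p₀ ∈ C (k+5) :=
          Submodule.sub_mem _ hζ (Submodule.smul_mem _ _ hp₀C)
        have hη0 : ζ - c' • p₀ ≠ 0 := fun h => hζne (by rwa [sub_eq_zero] at h)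
        obtain ⟨a, b, hux⟩ := cov (k+5) _ hηC hη0 u (castC (by omega) hu6)
        rw [sub_lie, smul_lie, hp₀x, hc', sub_self, smul_zero, sub_lie, smul_lie,
          hp₀y, smul_zero, sub_zero, h7 ζ hζ, smul_zero, add_zero] at hux
        exact hu0 hux
      -- y kills C (k+4)
      have h10 : ∀ c ∈ C (k+4), ⁅c, y⁆ = 0 := by
        intro c hc
        have hρC : ⁅c, y⁆ ∈ C (k+5) := castC (by omega) (bm (k+4) 1 hc hy1)
        obtain ⟨ω, hω⟩ := hCn1 ⁅c, y⁆ hρC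
        by_cases hω0 : ω = 0
        · rw [hω, hω0, zero_smul]
        · exfalso
          have h1 : ⁅⁅c, y⁆, v⁆ = 0 := (IH (k+4) (by omega)).2 c hc
          rw [hω, smul_lie, hp₀v] at h1
          exact hs0 (smul_cancel ω s hω0 h1)
      -- the element q₀ with [q₀, x] = p₀
      obtain ⟨c₁, hc₁, hc₁0⟩ := cne (k+4) (by omega)
      obtain ⟨a₄, b₄, hq⟩ := cov (k+4) c₁ hc₁ hc₁0 p₀ (castC (by omega) hp₀C)
      rw [h10 c₁ hc₁, smul_zero, add_zero] at hq
      set q₀ : L := a₄ • c₁ with hq0_def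
      have hq₀C : q₀ ∈ C (k+4) := Submodule.smul_mem _ _ hc₁
      have hq₀x : ⁅q₀, x⁆ = p₀ := by rw [hq0_def, smul_lie, ← hq]
      have hq₀y : ⁅q₀, y⁆ = 0 := h10 q₀ hq₀C
      have hq₀v : ⁅q₀, v⁆ = 0 := by
        rw [hv_def, leibniz_lie, hq₀x, hp₀y, hq₀y, lie_zero, add_zero]
      have hsqw : s = -⁅q₀, w⁆ := by
        rw [← hp₀v, ← hq₀x, jswap, hq₀v, zero_lie, zero_add, hxv, lie_neg]
      exact σne (by rw [hsqw, neg_lie, neg_eq_zero, jswap, hq₀v, zero_lie, zero_add,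
        hwv, lie_zero])
  -- conclusion
  intro z
  let φ : L →ₗ[F] L :=
    { toFun := fun z' => ⁅⁅z', y⁆, y⁆
      map_add' := fun p q => by
        show ⁅⁅p + q, y⁆, y⁆ = ⁅⁅p, y⁆, y⁆ + ⁅⁅q, y⁆, y⁆
        rw [add_lie, add_lie]
      map_smul' := fun c p => by
        show ⁅⁅c • p, y⁆, y⁆ = c • ⁅⁅p, y⁆, y⁆
        rw [smul_lie, smul_lie] }
  have hz : z ∈ (⊤ : Submodule F L) := Submodule.mem_top
  rw [← hthin.internal.submodule_iSup_eq_top] at hz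
  have hle : (⨆ n, C n) ≤ LinearMap.ker φ :=
    iSup_le fun n z' hz' => LinearMap.mem_ker.mpr ((main n).1 z' hz')
  exact LinearMap.mem_ker.mp (hle hz)
end

section
/- Let L be a thin Lie algebra whose second diamond is L_k with k > 5 (i.e. dim L_i = 1 for 2 ≤ i < k and dim L_k = 2). Then there exists a nonzero element y of L_1 with [L y y] = 0. -/
set_option maxRecDepth 10000
set_option maxHeartbeats 1000000


open Module

section ThinAux

variable {F : Type*} {L : Type*} [Field F] [LieRing L] [LieAlgebra F L]

/-- Leibniz-type identity. -/
lemma thin_id_v (t a b : L) : ⁅t, ⁅a, b⁆⁆ = ⁅⁅t, a⁆, b⁆ - ⁅⁅t, b⁆, a⁆ := by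
  rw [leibniz_lie t a b, ← lie_skew ⁅t, b⁆ a]
  abel

/-- Jacobi-type identity. -/
lemma thin_id_y (t s y : L) : ⁅⁅t, s⁆, y⁆ = ⁅⁅t, y⁆, s⁆ + ⁅t, ⁅s, y⁆⁆ := by
  rw [lie_lie, ← lie_skew ⁅t, y⁆ s]
  abel

/-- Key computation lemma (E1): at a revival after two dead levels, `[[r,x],y] = 0`. -/
lemma thin_E1 (x y v2 v3 v4 a b c r : L) (lam : F)
    (hv2 : v2 = ⁅x, y⁆) (hv3 : v3 = ⁅v2, x⁆) (hv4 : v4 = ⁅v3, x⁆)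
    (hv3y : ⁅v3, y⁆ = 0) (hv4y : ⁅v4, y⁆ = 0)
    (hb : b = ⁅a, x⁆) (hc : c = ⁅b, x⁆) (hr : r = ⁅c, y⁆)
    (hay : ⁅a, y⁆ = 0) (hby : ⁅b, y⁆ = 0) (hry : ⁅r, y⁆ = 0)
    (hlam : ⁅c, v2⁆ = lam • ⁅r, x⁆) :
    ⁅⁅r, x⁆, y⁆ = 0 ∧ ⁅r, v2⁆ = 0 := by
  have hf2b : ⁅b, v2⁆ = r := by
    rw [hv2, thin_id_v b x y, ← hc, ← hr, hby, zero_lie, sub_zero]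
  have hf2a : ⁅a, v2⁆ = 0 := by
    rw [hv2, thin_id_v a x y, ← hb, hby, hay, zero_lie, sub_zero]
  have hf3a : ⁅a, v3⁆ = -r := by
    rw [hv3, thin_id_v a v2 x, hf2a, zero_lie, ← hb, hf2b, zero_sub]
  have hf3b : ⁅b, v3⁆ = ⁅r, x⁆ - lam • ⁅r, x⁆ := by
    rw [hv3, thin_id_v b v2 x, hf2b, ← hc, hlam]
  have hf4a : ⁅a, v4⁆ = -⁅r, x⁆ - (⁅r, x⁆ - lam • ⁅r, x⁆) := by
    rw [hv4, thin_id_v a v3 x, hf3a, ← hb, hf3b, neg_lie]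
  have R1 : ⁅⁅b, v3⁆, y⁆ = 0 := by
    rw [thin_id_y b v3 y, hby, hv3y, zero_lie, lie_zero, add_zero]
  have R2 : ⁅⁅a, v4⁆, y⁆ = 0 := by
    rw [thin_id_y a v4 y, hay, hv4y, zero_lie, lie_zero, add_zero]
  rw [hf3b, sub_lie, smul_lie] at R1
  rw [hf4a, sub_lie, neg_lie, sub_lie, smul_lie] at R2
  rw [R1, sub_zero, neg_eq_zero] at R2
  refine ⟨R2, ?_⟩
  rw [hv2, thin_id_v r x y, R2, hry, zero_lie, sub_zero]

/-- Key computation lemma (E2): at a revival, `[[w,y],v2] = 0` in odd characteristic. -/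
lemma thin_E2 (x y v2 v3 v4 v5 a b u w r : L) (lam nu : F)
    (hv2 : v2 = ⁅x, y⁆) (hv3 : v3 = ⁅v2, x⁆) (hv4 : v4 = ⁅v3, x⁆) (hv5 : v5 = ⁅v4, x⁆)
    (hv3y : ⁅v3, y⁆ = 0) (hv4y : ⁅v4, y⁆ = 0) (hv5y : ⁅v5, y⁆ = 0)
    (hb : b = ⁅a, x⁆) (hu : u = ⁅b, x⁆) (hw : w = ⁅u, x⁆) (hr : r = ⁅u, y⁆)
    (hay : ⁅a, y⁆ = 0) (hby : ⁅b, y⁆ = 0)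
    (hrho : ⁅⁅r, x⁆, y⁆ = 0)
    (hlam : ⁅u, v2⁆ = lam • ⁅r, x⁆) (hnu : ⁅w, x⁆ = nu • ⁅r, x⁆)
    (h2 : (2 : F) ≠ 0) : ⁅⁅w, y⁆, v2⁆ = 0 := by
  have hwy : ⁅w, y⁆ = ⁅r, x⁆ + lam • ⁅r, x⁆ := by
    rw [hw, thin_id_y u x y, ← hr, ← hv2, hlam]
  have hwv2 : ⁅w, v2⁆ = -(⁅⁅r, x⁆, x⁆ + lam • ⁅⁅r, x⁆, x⁆) := by
    rw [hv2, thin_id_v w x y, hnu, smul_lie, hrho, smul_zero, hwy, add_lie, smul_lie,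
      zero_sub]
  have hf2b : ⁅b, v2⁆ = r := by
    rw [hv2, thin_id_v b x y, ← hu, ← hr, hby, zero_lie, sub_zero]
  have hf3b : ⁅b, v3⁆ = ⁅r, x⁆ - lam • ⁅r, x⁆ := by
    rw [hv3, thin_id_v b v2 x, hf2b, ← hu, hlam]
  have hf3u : ⁅u, v3⁆ = lam • ⁅⁅r, x⁆, x⁆ + (⁅⁅r, x⁆, x⁆ + lam • ⁅⁅r, x⁆, x⁆) := by
    rw [hv3, thin_id_v u v2 x, hlam, smul_lie, ← hw, hwv2, sub_neg_eq_add]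
  have hf4b : ⁅b, v4⁆ = (⁅⁅r, x⁆, x⁆ - lam • ⁅⁅r, x⁆, x⁆) -
      (lam • ⁅⁅r, x⁆, x⁆ + (⁅⁅r, x⁆, x⁆ + lam • ⁅⁅r, x⁆, x⁆)) := by
    rw [hv4, thin_id_v b v3 x, hf3b, ← hu, hf3u, sub_lie, smul_lie]
  have hf2a : ⁅a, v2⁆ = 0 := by
    rw [hv2, thin_id_v a x y, ← hb, hby, hay, zero_lie, sub_zero]
  have hf3a : ⁅a, v3⁆ = -r := by
    rw [hv3, thin_id_v a v2 x, hf2a, zero_lie, ← hb, hf2b, zero_sub]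
  have hf4a : ⁅a, v4⁆ = -⁅r, x⁆ - (⁅r, x⁆ - lam • ⁅r, x⁆) := by
    rw [hv4, thin_id_v a v3 x, hf3a, ← hb, hf3b, neg_lie]
  have hf5a : ⁅a, v5⁆ = (-⁅⁅r, x⁆, x⁆ - (⁅⁅r, x⁆, x⁆ - lam • ⁅⁅r, x⁆, x⁆)) -
      ((⁅⁅r, x⁆, x⁆ - lam • ⁅⁅r, x⁆, x⁆) -
        (lam • ⁅⁅r, x⁆, x⁆ + (⁅⁅r, x⁆, x⁆ + lam • ⁅⁅r, x⁆, x⁆))) := by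
    rw [hv5, thin_id_v a v4 x, hf4a, ← hb, hf4b, sub_lie, neg_lie, sub_lie, smul_lie]
  have R4 : ⁅⁅b, v4⁆, y⁆ = 0 := by
    rw [thin_id_y b v4 y, hby, hv4y, zero_lie, lie_zero, add_zero]
  have R5 : ⁅⁅a, v5⁆, y⁆ = 0 := by
    rw [thin_id_y a v5 y, hay, hv5y, zero_lie, lie_zero, add_zero]
  rw [hf4b] at R4
  rw [hf5a] at R5
  simp only [sub_lie, add_lie, smul_lie, neg_lie] at R4 R5
  set A := ⁅⁅⁅r, x⁆, x⁆, y⁆ with hA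
  have hR4 : (3 * lam) • A = 0 := by
    rw [show (3 * lam) • A =
      -((A - lam • A) - (lam • A + (A + lam • A))) from by module, R4, neg_zero]
  have hR5 : (4 * lam - 2) • A = 0 := by
    rw [show (4 * lam - 2) • A =
      (-A - (A - lam • A)) - ((A - lam • A) - (lam • A + (A + lam • A))) from by module]
    exact R5
  have hd : (lam - 2) • A = 0 := by
    rw [show (lam - 2) • A = (4 * lam - 2) • A - (3 * lam) • A from by module, hR5, hR4,
      sub_zero]
  have hlam2 : lam • A = (2 : F) • A := by
    rw [show lam • A = (lam - 2) • A + (2 : F) • A from by module, hd, zero_add]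
  have h3l : (3 : F) • (lam • A) = 0 := by
    rw [show (3 : F) • (lam • A) = (3 * lam) • A from by module]
    exact hR4
  have h6 : (2 : F) • ((3 : F) • A) = 0 := by
    rw [show (2 : F) • ((3 : F) • A) = (3 : F) • ((2 : F) • A) from by module, ← hlam2]
    exact h3l
  have h3A : (3 : F) • A = 0 := by
    rcases smul_eq_zero.mp h6 with h | h
    · exact absurd h h2
    · exact h
  have hr2v2 : ⁅⁅r, x⁆, v2⁆ = A := by
    rw [hv2, thin_id_v ⁅r, x⁆ x y, hrho, zero_lie, sub_zero, hA]
  rw [hwy, add_lie, smul_lie, hr2v2]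
  rw [show A + lam • A = A + (2:F) • A from by rw [hlam2],
    show A + (2 : F) • A = (3 : F) • A from by module, h3A]

end ThinAux

section ThinChain

variable (F : Type*) {L : Type*} [Field F] [LieRing L] [LieAlgebra F L]

/-- The standard graded filtration generated by `C 1` under brackets. -/
def thinChain (C : ℕ → Submodule F L) : ℕ → Submodule F L
  | 0 => ⊥
  | 1 => C 1
  | (n + 2) => Submodule.span F {w : L | ∃ z ∈ thinChain C (n + 1), ∃ a ∈ C 1, w = ⁅z, a⁆}

variable {F}
variable {C : ℕ → Submodule F L}

lemma thinChain_le (hthin : IsThinGraded F L C) : ∀ n, thinChain F C n ≤ C n := by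
  intro n
  induction n using Nat.strong_induction_on with
  | _ n ih =>
    match n with
    | 0 => exact bot_le
    | 1 => exact le_rfl
    | (n + 2) =>
      refine Submodule.span_le.mpr ?_
      rintro w ⟨z, hz, a, ha, rfl⟩
      exact hthin.bracket_mem (n + 1) 1 z (ih (n + 1) (by omega) hz) a ha

lemma thinChain_bracket_one {m : ℕ} {u a : L}
    (hu : u ∈ thinChain F C m) (ha : a ∈ C 1) : ⁅u, a⁆ ∈ thinChain F C (m + 1) := by
  match m with
  | 0 =>
    have h0 : u = 0 := by simpa [thinChain] using hu
    rw [h0, zero_lie]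
    exact zero_mem _
  | (m + 1) => exact Submodule.subset_span ⟨u, hu, a, ha, rfl⟩

lemma thinChain_bracket : ∀ n m, ∀ u w : L, u ∈ thinChain F C m →
    w ∈ thinChain F C n → ⁅u, w⁆ ∈ thinChain F C (m + n) := by
  intro n
  induction n using Nat.strong_induction_on with
  | _ n ih =>
    match n with
    | 0 =>
      intro m u w hu hw
      have h0 : w = 0 := by simpa [thinChain] using hw
      rw [h0, lie_zero]
      exact zero_mem _
    | 1 =>
      intro m u w hu hw
      exact thinChain_bracket_one hu hw
    | (n + 2) =>
      intro m u w hu hw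
      induction hw using Submodule.span_induction with
      | mem b hb =>
        obtain ⟨z, hz, a, ha, rfl⟩ := hb
        have h1 : ⁅u, z⁆ ∈ thinChain F C (m + (n + 1)) := ih (n + 1) (by omega) m u z hu hz
        have h2 : ⁅⁅u, z⁆, a⁆ ∈ thinChain F C (m + (n + 1) + 1) := thinChain_bracket_one h1 ha
        have h3 : ⁅u, a⁆ ∈ thinChain F C (m + 1) := thinChain_bracket_one hu ha
        have h4 : ⁅⁅u, a⁆, z⁆ ∈ thinChain F C (m + 1 + (n + 1)) :=
          ih (n + 1) (by omega) (m + 1) _ z h3 hz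
        rw [thin_id_v u z a]
        rw [show m + (n + 1) + 1 = m + (n + 2) by omega] at h2
        rw [show m + 1 + (n + 1) = m + (n + 2) by omega] at h4
        exact sub_mem h2 h4
      | zero => rw [lie_zero]; exact zero_mem _
      | add a b _ _ pa pb => rw [lie_add]; exact add_mem pa pb
      | smul c a _ pa => rw [lie_smul]; exact Submodule.smul_mem _ _ pa

lemma thinChain_top (hthin : IsThinGraded F L C) (u : L) :
    u ∈ ⨆ n, thinChain F C n := by
  have hlie : ∀ a b : L, a ∈ (⨆ n, thinChain F C n) → b ∈ (⨆ n, thinChain F C n) →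
      ⁅a, b⁆ ∈ (⨆ n, thinChain F C n) := by
    intro a b ha hb
    refine Submodule.iSup_induction _
      (motive := fun a => ∀ b ∈ (⨆ n, thinChain F C n), ⁅a, b⁆ ∈ (⨆ n, thinChain F C n))
      ha ?_ ?_ ?_ b hb
    · intro i a' ha' b' hb'
      refine Submodule.iSup_induction _
        (motive := fun b' => ⁅a', b'⁆ ∈ (⨆ n, thinChain F C n)) hb' ?_ ?_ ?_
      · intro j b'' hb''
        exact le_iSup (thinChain F C) (i + j) (thinChain_bracket j i a' b'' ha' hb'')
      · show ⁅a', (0 : L)⁆ ∈ _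
        rw [lie_zero]; exact zero_mem _
      · intro c d hc hd
        show ⁅a', c + d⁆ ∈ _
        rw [lie_add]; exact add_mem hc hd
    · show ∀ b ∈ (⨆ n, thinChain F C n), ⁅(0 : L), b⁆ ∈ (⨆ n, thinChain F C n)
      intro b' hb'
      rw [zero_lie]; exact zero_mem _
    · intro c d hc hd
      show ∀ b ∈ (⨆ n, thinChain F C n), ⁅c + d, b⁆ ∈ (⨆ n, thinChain F C n)
      intro b' hb'
      rw [add_lie]; exact add_mem (hc b' hb') (hd b' hb')
  let K : LieSubalgebra F L :=
    { (⨆ n, thinChain F C n : Submodule F L) with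
      lie_mem' := fun {a b} ha hb => hlie a b ha hb }
  have hC1 : (C 1 : Set L) ⊆ K := fun a ha => le_iSup (thinChain F C) 1 ha
  have htop : LieSubalgebra.lieSpan F L (C 1 : Set L) ≤ K :=
    (LieSubalgebra.lieSpan_le).mpr hC1
  rw [hthin.generates] at htop
  exact htop (LieSubalgebra.mem_top u)

/-- If some positive graded component vanishes, so does the next one. -/
lemma thin_botsucc (hthin : IsThinGraded F L C) {i : ℕ} (hi : 1 ≤ i) (h : C i = ⊥) :
    C (i + 1) = ⊥ := by
  obtain ⟨j, rfl⟩ : ∃ j, i = j + 1 := ⟨i - 1, by omega⟩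
  have hG : thinChain F C (j + 1) = ⊥ := le_bot_iff.mp (h ▸ thinChain_le hthin (j + 1))
  have hGbot : thinChain F C (j + 2) = ⊥ := by
    rw [show thinChain F C (j + 2) =
      Submodule.span F {w : L | ∃ z ∈ thinChain F C (j + 1), ∃ a ∈ C 1, w = ⁅z, a⁆} from rfl,
      Submodule.span_eq_bot]
    rintro w ⟨z, hz, a, ha, rfl⟩
    rw [hG] at hz
    rw [(Submodule.mem_bot F).mp hz, zero_lie]
  rw [Submodule.eq_bot_iff]
  intro u hu
  have hT : u ∈ ⨆ n, thinChain F C n := thinChain_top hthin u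
  have hle : (⨆ n, thinChain F C n) ≤ ⨆ n, ⨆ (_ : n ≠ j + 2), C n := by
    refine iSup_le fun n => ?_
    by_cases hn : n = j + 2
    · subst hn
      rw [hGbot]
      exact bot_le
    · exact (thinChain_le hthin n).trans (le_iSup_of_le n (le_iSup_of_le hn le_rfl))
  have hdisj := hthin.internal.submodule_iSupIndep (j + 2)
  exact (Submodule.disjoint_def.mp hdisj) u hu (hle hT)

end ThinChain

section ThinMain

variable {F : Type*} {L : Type*} [Field F] [LieRing L] [LieAlgebra F L]
variable {C : ℕ → Submodule F L}

/-- The main graded induction: both `[[u,y],y] = 0` and `[[u,y],v2] = 0` on every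
graded component, in odd characteristic. -/
lemma thin_main_induction
    (x y v2 v3 v4 v5 : L)
    (hC0 : C 0 = ⊥)
    (hbm : ∀ i j : ℕ, ∀ u ∈ C i, ∀ v ∈ C j, ⁅u, v⁆ ∈ C (i + j))
    (hbot : ∀ i : ℕ, 1 ≤ i → C i = ⊥ → C (i + 1) = ⊥)
    (hcov : ∀ i : ℕ, ∀ z ∈ C i, z ≠ 0 → ∀ u ∈ C (i + 1),
      ∃ α β : F, u = α • ⁅z, x⁆ + β • ⁅z, y⁆)
    (hxC : x ∈ C 1) (hyC : y ∈ C 1) (hv2C : v2 ∈ C 2)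
    (hv2 : v2 = ⁅x, y⁆) (hv3 : v3 = ⁅v2, x⁆) (hv4 : v4 = ⁅v3, x⁆) (hv5 : v5 = ⁅v4, x⁆)
    (hv2y : ⁅v2, y⁆ = 0) (hv3y : ⁅v3, y⁆ = 0) (hv4y : ⁅v4, y⁆ = 0) (hv5y : ⁅v5, y⁆ = 0)
    (hbase1 : ∀ u ∈ C 1, ∃ p q : F, u = p • x + q • y)
    (hdead2 : ∀ u ∈ C 2, ⁅u, y⁆ = 0) (hdead3 : ∀ u ∈ C 3, ⁅u, y⁆ = 0)
    (h2 : (2 : F) ≠ 0) :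
    ∀ n : ℕ, (∀ u ∈ C n, ⁅⁅u, y⁆, y⁆ = 0) ∧ (∀ u ∈ C n, ⁅⁅u, y⁆, v2⁆ = 0) := by
  intro n
  induction n using Nat.strong_induction_on with
  | _ n ih =>
    match n with
    | 0 =>
      constructor <;> intro u hu <;> rw [hC0] at hu <;>
        rw [(Submodule.mem_bot F).mp hu] <;> simp
    | 1 =>
      constructor <;> intro u hu <;> obtain ⟨p, q, rfl⟩ := hbase1 u hu <;>
        simp [add_lie, smul_lie, lie_self, ← hv2, hv2y]
    | 2 =>
      constructor <;> intro u hu <;> rw [hdead2 u hu, zero_lie]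
    | 3 =>
      constructor <;> intro u hu <;> rw [hdead3 u hu, zero_lie]
    | (m + 4) =>
      by_cases hCn : C (m + 4) = ⊥
      · constructor <;> intro u hu <;> rw [hCn] at hu <;>
          rw [(Submodule.mem_bot F).mp hu] <;> simp
      · have hC3ne : C (m + 3) ≠ ⊥ := fun h => hCn (hbot (m + 3) (by omega) h)
        obtain ⟨z, hzC, hz0⟩ := (Submodule.ne_bot_iff _).mp hC3ne
        have ihA3 : ∀ u ∈ C (m + 3), ⁅⁅u, y⁆, y⁆ = 0 := (ih (m + 3) (by omega)).1
        have ihB3 : ∀ u ∈ C (m + 3), ⁅⁅u, y⁆, v2⁆ = 0 := (ih (m + 3) (by omega)).2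
        have ihA2 : ∀ u ∈ C (m + 2), ⁅⁅u, y⁆, y⁆ = 0 := (ih (m + 2) (by omega)).1
        have ihB2 : ∀ u ∈ C (m + 2), ⁅⁅u, y⁆, v2⁆ = 0 := (ih (m + 2) (by omega)).2
        have ihB1 : ∀ u ∈ C (m + 1), ⁅⁅u, y⁆, v2⁆ = 0 := (ih (m + 1) (by omega)).2
        -- A (m+4) :
        have hA : ∀ u ∈ C (m + 4), ⁅⁅u, y⁆, y⁆ = 0 := by
          intro u hu
          obtain ⟨α, β, hu'⟩ := hcov (m + 3) z hzC hz0 u hu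
          subst hu'
          have hzyy : ⁅⁅z, y⁆, y⁆ = 0 := ihA3 z hzC
          have hzyv : ⁅⁅z, y⁆, v2⁆ = 0 := ihB3 z hzC
          have hzv2y : ⁅⁅z, v2⁆, y⁆ = 0 := by
            rw [thin_id_y z v2 y, hzyv, hv2y, lie_zero, add_zero]
          have hzxyy : ⁅⁅⁅z, x⁆, y⁆, y⁆ = 0 := by
            rw [thin_id_y z x y, ← hv2, add_lie, hzv2y, add_zero,
              thin_id_y ⁅z, y⁆ x y, hzyy, zero_lie, zero_add, ← hv2, hzyv]
          simp only [add_lie, smul_lie, hzxyy, hzyy, zero_lie, smul_zero, add_zero]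
        refine ⟨hA, ?_⟩
        -- B (m+4) :
        by_cases hI : ∃ t ∈ C (m + 2), ⁅t, y⁆ ≠ 0
        · obtain ⟨t, htC, hty⟩ := hI
          have hz'C : ⁅t, y⁆ ∈ C (m + 3) := hbm (m + 2) 1 t htC y hyC
          have h1 : ⁅⁅t, y⁆, y⁆ = 0 := ihA2 t htC
          have h2' : ⁅⁅t, y⁆, v2⁆ = 0 := ihB2 t htC
          intro u hu
          obtain ⟨α, β, hu'⟩ := hcov (m + 3) ⁅t, y⁆ hz'C hty u hu
          subst hu'
          have key : ⁅⁅⁅t, y⁆, x⁆, y⁆ = 0 := by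
            rw [thin_id_y ⁅t, y⁆ x y, h1, zero_lie, zero_add, ← hv2, h2']
          simp only [add_lie, smul_lie, key, h1, zero_lie, smul_zero, add_zero]
        · push_neg at hI
          by_cases hII : ∃ t3 ∈ C (m + 1), ⁅t3, y⁆ ≠ 0
          · -- the level m+1 is alive; levels m+2, m+3 are then dead
            obtain ⟨t3, ht3C, ht3y⟩ := hII
            have hrtC : ⁅t3, y⁆ ∈ C (m + 2) := hbm (m + 1) 1 t3 ht3C y hyC
            have hrtv2 : ⁅⁅t3, y⁆, v2⁆ = 0 := ihB1 t3 ht3C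
            have hdeadn1 : ∀ v' ∈ C (m + 3), ⁅v', y⁆ = 0 := by
              intro v' hv'
              obtain ⟨α, β, hv''⟩ := hcov (m + 2) ⁅t3, y⁆ hrtC ht3y v' hv'
              subst hv''
              have hkill : ⁅⁅⁅t3, y⁆, x⁆, y⁆ = 0 := by
                rw [thin_id_y ⁅t3, y⁆ x y, hI ⁅t3, y⁆ hrtC, zero_lie, zero_add, ← hv2,
                  hrtv2]
              simp only [add_lie, smul_lie, hkill, hI ⁅t3, y⁆ hrtC, zero_lie, smul_zero,
                add_zero]
            -- E1 applied to the chain rt → b → u'' :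
            have hbC : ⁅⁅t3, y⁆, x⁆ ∈ C (m + 3) := hbm (m + 2) 1 _ hrtC x hxC
            have hu''C : ⁅⁅⁅t3, y⁆, x⁆, x⁆ ∈ C (m + 4) := hbm (m + 3) 1 _ hbC x hxC
            have hr''C : ⁅⁅⁅⁅t3, y⁆, x⁆, x⁆, y⁆ ∈ C (m + 5) := hbm (m + 4) 1 _ hu''C y hyC
            have hr''y : ⁅⁅⁅⁅⁅t3, y⁆, x⁆, x⁆, y⁆, y⁆ = 0 := hA _ hu''C
            have hrv2 : ⁅⁅⁅⁅⁅t3, y⁆, x⁆, x⁆, y⁆, v2⁆ = 0 := by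
              by_cases hr0 : ⁅⁅⁅⁅t3, y⁆, x⁆, x⁆, y⁆ = 0
              · rw [hr0, zero_lie]
              · have hemem : ⁅⁅⁅⁅t3, y⁆, x⁆, x⁆, v2⁆ ∈ C (m + 6) :=
                  hbm (m + 4) 2 _ hu''C v2 hv2C
                obtain ⟨lam, mu, hlam'⟩ := hcov (m + 5) _ hr''C hr0 _ hemem
                rw [hr''y, smul_zero, add_zero] at hlam'
                exact (thin_E1 x y v2 v3 v4 ⁅t3, y⁆ ⁅⁅t3, y⁆, x⁆ ⁅⁅⁅t3, y⁆, x⁆, x⁆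
                  ⁅⁅⁅⁅t3, y⁆, x⁆, x⁆, y⁆ lam hv2 hv3 hv4 hv3y hv4y rfl rfl rfl
                  (hI ⁅t3, y⁆ hrtC) (hdeadn1 _ hbC) hr''y hlam').2
            intro u hu
            obtain ⟨α, β, hu'⟩ := hcov (m + 3) z hzC hz0 u hu
            subst hu'
            obtain ⟨α₂, β₂, hz'⟩ := hcov (m + 2) ⁅t3, y⁆ hrtC ht3y z hzC
            rw [hI ⁅t3, y⁆ hrtC, smul_zero, add_zero] at hz'
            have hzy : ⁅z, y⁆ = 0 := hdeadn1 z hzC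
            have hbv2r : ⁅⁅⁅t3, y⁆, x⁆, v2⁆ = ⁅⁅⁅⁅t3, y⁆, x⁆, x⁆, y⁆ := by
              rw [hv2, thin_id_v ⁅⁅t3, y⁆, x⁆ x y, hdeadn1 _ hbC, zero_lie, sub_zero]
            have hzxy : ⁅⁅z, x⁆, y⁆ = α₂ • ⁅⁅⁅⁅t3, y⁆, x⁆, x⁆, y⁆ := by
              rw [thin_id_y z x y, hzy, zero_lie, zero_add, ← hv2, hz', smul_lie, hbv2r]
            simp only [add_lie, smul_lie, hzxy, hzy, zero_lie, smul_zero, add_zero, hrv2]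
          · push_neg at hII
            -- levels m+1, m+2 are dead
            have hC1ne : C (m + 1) ≠ ⊥ := by
              intro h
              exact hC3ne (hbot (m + 2) (by omega) (hbot (m + 1) (by omega) h))
            obtain ⟨z₃, hz₃C, hz₃0⟩ := (Submodule.ne_bot_iff _).mp hC1ne
            have hz₂C : ⁅z₃, x⁆ ∈ C (m + 2) := hbm (m + 1) 1 z₃ hz₃C x hxC
            have hz₂0 : ⁅z₃, x⁆ ≠ 0 := by
              intro h0
              apply hC3ne
              apply hbot (m + 2) (by omega)
              rw [Submodule.eq_bot_iff]
              intro u hu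
              obtain ⟨α, β, hu'⟩ := hcov (m + 1) z₃ hz₃C hz₃0 u hu
              rw [hu', h0, smul_zero, zero_add, hII z₃ hz₃C, smul_zero]
            have hu₁C : ⁅⁅z₃, x⁆, x⁆ ∈ C (m + 3) := hbm (m + 2) 1 _ hz₂C x hxC
            have hu₁0 : ⁅⁅z₃, x⁆, x⁆ ≠ 0 := by
              intro h0
              apply hC3ne
              rw [Submodule.eq_bot_iff]
              intro u hu
              obtain ⟨α, β, hu'⟩ := hcov (m + 2) ⁅z₃, x⁆ hz₂C hz₂0 u hu
              rw [hu', h0, smul_zero, zero_add, hI ⁅z₃, x⁆ hz₂C, smul_zero]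
            have hr₁C : ⁅⁅⁅z₃, x⁆, x⁆, y⁆ ∈ C (m + 4) := hbm (m + 3) 1 _ hu₁C y hyC
            have hr₁y : ⁅⁅⁅⁅z₃, x⁆, x⁆, y⁆, y⁆ = 0 := ihA3 _ hu₁C
            by_cases hr₁0 : ⁅⁅⁅z₃, x⁆, x⁆, y⁆ = 0
            · -- dead again at m+3 : use E1 one level higher
              have hu₂C : ⁅⁅⁅z₃, x⁆, x⁆, x⁆ ∈ C (m + 4) := hbm (m + 3) 1 _ hu₁C x hxC
              have hrC : ⁅⁅⁅⁅z₃, x⁆, x⁆, x⁆, y⁆ ∈ C (m + 5) := hbm (m + 4) 1 _ hu₂C y hyC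
              have hry : ⁅⁅⁅⁅⁅z₃, x⁆, x⁆, x⁆, y⁆, y⁆ = 0 := hA _ hu₂C
              have hrv2 : ⁅⁅⁅⁅⁅z₃, x⁆, x⁆, x⁆, y⁆, v2⁆ = 0 := by
                by_cases h0 : ⁅⁅⁅⁅z₃, x⁆, x⁆, x⁆, y⁆ = 0
                · rw [h0, zero_lie]
                · have hemem : ⁅⁅⁅⁅z₃, x⁆, x⁆, x⁆, v2⁆ ∈ C (m + 6) :=
                    hbm (m + 4) 2 _ hu₂C v2 hv2C
                  obtain ⟨lam, mu, hlam'⟩ := hcov (m + 5) _ hrC h0 _ hemem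
                  rw [hry, smul_zero, add_zero] at hlam'
                  exact (thin_E1 x y v2 v3 v4 ⁅z₃, x⁆ ⁅⁅z₃, x⁆, x⁆ ⁅⁅⁅z₃, x⁆, x⁆, x⁆
                    ⁅⁅⁅⁅z₃, x⁆, x⁆, x⁆, y⁆ lam hv2 hv3 hv4 hv3y hv4y rfl rfl rfl
                    (hI ⁅z₃, x⁆ hz₂C) hr₁0 hry hlam').2
              intro u hu
              obtain ⟨α, β, hu'⟩ := hcov (m + 3) ⁅⁅z₃, x⁆, x⁆ hu₁C hu₁0 u hu
              subst hu'
              simp only [add_lie, smul_lie, hr₁0, zero_lie, smul_zero, add_zero, hrv2]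
            · -- the genuine revival : E1 + E2
              have hemem : ⁅⁅⁅z₃, x⁆, x⁆, v2⁆ ∈ C (m + 5) := hbm (m + 3) 2 _ hu₁C v2 hv2C
              obtain ⟨lam, mu, hlam'⟩ := hcov (m + 4) _ hr₁C hr₁0 _ hemem
              rw [hr₁y, smul_zero, add_zero] at hlam'
              have hE1 := thin_E1 x y v2 v3 v4 z₃ ⁅z₃, x⁆ ⁅⁅z₃, x⁆, x⁆
                ⁅⁅⁅z₃, x⁆, x⁆, y⁆ lam hv2 hv3 hv4 hv3y hv4y rfl rfl rfl
                (hII z₃ hz₃C) (hI ⁅z₃, x⁆ hz₂C) hr₁y hlam'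
              have hw₁C : ⁅⁅⁅z₃, x⁆, x⁆, x⁆ ∈ C (m + 4) := hbm (m + 3) 1 _ hu₁C x hxC
              have hnumem : ⁅⁅⁅⁅z₃, x⁆, x⁆, x⁆, x⁆ ∈ C (m + 5) := hbm (m + 4) 1 _ hw₁C x hxC
              obtain ⟨nu, nu2, hnu'⟩ := hcov (m + 4) _ hr₁C hr₁0 _ hnumem
              rw [hr₁y, smul_zero, add_zero] at hnu'
              have hE2 := thin_E2 x y v2 v3 v4 v5 z₃ ⁅z₃, x⁆ ⁅⁅z₃, x⁆, x⁆
                ⁅⁅⁅z₃, x⁆, x⁆, x⁆ ⁅⁅⁅z₃, x⁆, x⁆, y⁆ lam nu hv2 hv3 hv4 hv5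
                hv3y hv4y hv5y rfl rfl rfl rfl (hII z₃ hz₃C) (hI ⁅z₃, x⁆ hz₂C)
                hE1.1 hlam' hnu' h2
              intro u hu
              obtain ⟨α, β, hu'⟩ := hcov (m + 3) ⁅⁅z₃, x⁆, x⁆ hu₁C hu₁0 u hu
              subst hu'
              simp only [add_lie, smul_lie, hE2, hr₁y, zero_lie, smul_zero, add_zero]

end ThinMain

/-- Main theorem: if the second diamond of a thin Lie algebra is `L_k` with
`k > 5`, then `[L y y] = 0` for some nonzero `y ∈ L₁`. -/
theorem thin_sandwich {F L : Type*} [Field F] [LieRing L] [LieAlgebra F L]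
    {C : ℕ → Submodule F L} (hthin : IsThinGraded F L C)
    {k : ℕ} (hk : 5 < k)
    (hone : ∀ i, 2 ≤ i → i < k → Module.finrank F (C i) = 1)
    (hdiam : Module.finrank F (C k) = 2) :
    ∃ y ∈ C 1, y ≠ 0 ∧ ∀ z : L, ⁅⁅z, y⁆, y⁆ = 0 := by
  classical
  have hC2r : finrank F (C 2) = 1 := hone 2 le_rfl (by omega)
  have hC3r : finrank F (C 3) = 1 := hone 3 (by omega) (by omega)
  have hC4r : finrank F (C 4) = 1 := hone 4 (by omega) (by omega)
  have hC5r : finrank F (C 5) = 1 := hone 5 (by omega) (by omega)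
  have hfin1 : Module.Finite F (C 1) :=
    Module.finite_of_finrank_pos (by rw [hthin.dim_one]; omega)
  have hfin3 : Module.Finite F (C 3) :=
    Module.finite_of_finrank_pos (by rw [hC3r]; omega)
  have hC2ne : C 2 ≠ ⊥ := by
    intro h
    rw [h] at hC2r
    simp [finrank_bot] at hC2r
  obtain ⟨v, hvC, hv0⟩ := (Submodule.ne_bot_iff _).mp hC2ne
  -- choose `y` killing `v`, and a complement `x`
  obtain ⟨x, y, hxC1, hyC, hx0, hy0, hvy, hbase1⟩ :
      ∃ x y : L, x ∈ C 1 ∧ y ∈ C 1 ∧ x ≠ 0 ∧ y ≠ 0 ∧ ⁅v, y⁆ = 0 ∧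
        ∀ u ∈ C 1, ∃ s t : F, u = s • x + t • y := by
    let ψ : (C 1) →ₗ[F] (C 3) :=
      { toFun := fun u => ⟨⁅v, (u : L)⁆, hthin.bracket_mem 2 1 v hvC _ u.2⟩
        map_add' := fun u w => Subtype.ext (by simp [lie_add])
        map_smul' := fun c u => Subtype.ext (by simp [lie_smul]) }
    have hker : LinearMap.ker ψ ≠ ⊥ := by
      intro hker
      have hinj := LinearMap.ker_eq_bot.mp hker
      have hle := LinearMap.finrank_le_finrank_of_injective hinj
      rw [hthin.dim_one, hC3r] at hle
      omega
    obtain ⟨y', hy'k, hy'0⟩ := (Submodule.ne_bot_iff _).mp hker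
    have hvy' : ⁅v, (y' : L)⁆ = 0 := congrArg Subtype.val (LinearMap.mem_ker.mp hy'k)
    have hy0' : (y' : L) ≠ 0 := fun h => hy'0 (by exact_mod_cast h)
    let b : Basis (Fin 2) F (C 1) := Module.finBasisOfFinrankEq F (C 1) hthin.dim_one
    have hrepr : ∀ u : C 1,
        (u : L) = (b.repr u 0) • ((b 0 : C 1) : L) + (b.repr u 1) • ((b 1 : C 1) : L) := by
      intro u
      have h := b.sum_repr u
      rw [Fin.sum_univ_two] at h
      have := congrArg (Subtype.val) h
      simpa using this.symm
    have hb0ne : ((b 0 : C 1) : L) ≠ 0 := fun h => b.ne_zero 0 (by exact_mod_cast h)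
    have hb1ne : ((b 1 : C 1) : L) ≠ 0 := fun h => b.ne_zero 1 (by exact_mod_cast h)
    by_cases hp : b.repr y' 0 = 0
    · have hq : b.repr y' 1 ≠ 0 := by
        intro hq
        apply hy0'
        rw [hrepr y', hp, hq, zero_smul, zero_smul, add_zero]
      refine ⟨((b 0 : C 1) : L), (y' : L), (b 0).2, y'.2, hb0ne, hy0', hvy', ?_⟩
      intro u hu
      have hb1 : ((b 1 : C 1) : L) = (b.repr y' 1)⁻¹ • (y' : L) := by
        rw [hrepr y', hp, zero_smul, zero_add, smul_smul, inv_mul_cancel₀ hq, one_smul]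
      refine ⟨b.repr ⟨u, hu⟩ 0, (b.repr ⟨u, hu⟩ 1) * (b.repr y' 1)⁻¹, ?_⟩
      have := hrepr ⟨u, hu⟩
      refine this.trans ?_
      rw [hb1, smul_smul]
    · refine ⟨((b 1 : C 1) : L), (y' : L), (b 1).2, y'.2, hb1ne, hy0', hvy', ?_⟩
      intro u hu
      have hb0 : ((b 0 : C 1) : L) = (b.repr y' 0)⁻¹ • (y' : L) -
          ((b.repr y' 0)⁻¹ * b.repr y' 1) • ((b 1 : C 1) : L) := by
        rw [hrepr y']
        match_scalars <;> field_simp <;> ring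
      refine ⟨b.repr ⟨u, hu⟩ 1 - b.repr ⟨u, hu⟩ 0 * ((b.repr y' 0)⁻¹ * b.repr y' 1),
        b.repr ⟨u, hu⟩ 0 * (b.repr y' 0)⁻¹, ?_⟩
      have := hrepr ⟨u, hu⟩
      refine this.trans ?_
      rw [hb0]
      module
  -- covering in coordinate form
  have hcov : ∀ i : ℕ, ∀ z ∈ C i, z ≠ 0 → ∀ u ∈ C (i + 1),
      ∃ α β : F, u = α • ⁅z, x⁆ + β • ⁅z, y⁆ := by
    intro i z hz h0 u hu
    rw [← hthin.covering i z hz h0] at hu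
    have hsub : {w : L | ∃ a ∈ C 1, w = ⁅z, a⁆} ⊆
        (Submodule.span F {⁅z, x⁆, ⁅z, y⁆} : Set L) := by
      rintro w ⟨a, ha, rfl⟩
      obtain ⟨s, t, rfl⟩ := hbase1 a ha
      rw [lie_add, lie_smul, lie_smul]
      exact Submodule.add_mem _
        (Submodule.smul_mem _ _ (Submodule.subset_span (by simp)))
        (Submodule.smul_mem _ _ (Submodule.subset_span (by simp)))
    have hmem := Submodule.span_le.mpr hsub hu
    obtain ⟨α, β, h⟩ := Submodule.mem_span_pair.mp hmem
    exact ⟨α, β, h.symm⟩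
  -- basic facts about v2 = ⁅x,y⁆
  have hv2C : ⁅x, y⁆ ∈ C 2 := hthin.bracket_mem 1 1 x hxC1 y hyC
  have hv2ne : ⁅x, y⁆ ≠ 0 := by
    intro h0
    apply hC2ne
    rw [Submodule.eq_bot_iff]
    intro u hu
    obtain ⟨α, β, hu'⟩ := hcov 1 x hxC1 hx0 u hu
    rw [hu', lie_self, h0, smul_zero, smul_zero, add_zero]
  have hone2 : ∀ u ∈ C 2, ∃ d : F, u = d • v := by
    intro u hu
    have hb : (⟨v, hvC⟩ : C 2) ≠ 0 := by simpa using hv0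
    obtain ⟨d, hd⟩ := (finrank_eq_one_iff_of_nonzero' (⟨v, hvC⟩ : C 2) hb).mp hC2r ⟨u, hu⟩
    exact ⟨d, by simpa [Subtype.ext_iff] using hd.symm⟩
  have hdead2 : ∀ u ∈ C 2, ⁅u, y⁆ = 0 := by
    intro u hu
    obtain ⟨d, hd⟩ := hone2 u hu
    rw [hd, smul_lie, hvy, smul_zero]
  have hv2y : ⁅⁅x, y⁆, y⁆ = 0 := hdead2 _ hv2C
  by_cases hchar2 : (2 : F) = 0
  · -- characteristic two : the kernel of (ad y)² is a subalgebra containing x and y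
    refine ⟨y, hyC, hy0, ?_⟩
    have hker2 : ∀ z w : L, ⁅y, ⁅y, z⁆⁆ = 0 → ⁅y, ⁅y, w⁆⁆ = 0 →
        ⁅y, ⁅y, ⁅z, w⁆⁆⁆ = 0 := by
      intro z w hz hw
      rw [leibniz_lie y z w, lie_add, leibniz_lie y ⁅y, z⁆ w,
        leibniz_lie y z ⁅y, w⁆, hz, hw, zero_lie, lie_zero, add_zero, zero_add,
        ← two_smul F, hchar2, zero_smul]
    let K : LieSubalgebra F L :=
      { carrier := {z : L | ⁅y, ⁅y, z⁆⁆ = 0}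
        add_mem' := fun {a b} ha hb => by
          simp only [Set.mem_setOf_eq, lie_add] at *
          rw [ha, hb, add_zero]
        zero_mem' := by simp
        smul_mem' := fun c a ha => by
          simp only [Set.mem_setOf_eq, lie_smul] at *
          rw [ha, smul_zero]
        lie_mem' := fun {a b} ha hb => hker2 a b ha hb }
    have hyyx : ⁅y, ⁅y, x⁆⁆ = 0 := by
      rw [neg_eq_iff_eq_neg.mp (lie_skew x y), lie_neg,
        neg_eq_iff_eq_neg.mp (lie_skew ⁅x, y⁆ y), hv2y, neg_zero, neg_zero]
    have hC1K : (C 1 : Set L) ⊆ ↑K := by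
      intro a ha
      obtain ⟨s, t, rfl⟩ := hbase1 a ha
      show ⁅y, ⁅y, s • x + t • y⁆⁆ = 0
      rw [lie_add, lie_smul, lie_smul, lie_self, smul_zero, add_zero, lie_smul, hyyx,
        smul_zero]
    have htop2 : LieSubalgebra.lieSpan F L (C 1 : Set L) ≤ K :=
      LieSubalgebra.lieSpan_le.mpr hC1K
    rw [hthin.generates] at htop2
    intro z
    have hz : ⁅y, ⁅y, z⁆⁆ = 0 := htop2 (LieSubalgebra.mem_top z)
    rw [← lie_skew ⁅z, y⁆ y, neg_eq_zero, neg_eq_iff_eq_neg.mp (lie_skew y z), lie_neg,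
      hz, neg_zero]
  · -- odd characteristic
    -- the elements v3 = [v2,x], v4 = [v3,x], v5 = [v4,x]
    have hv3C : ⁅⁅x, y⁆, x⁆ ∈ C 3 := hthin.bracket_mem 2 1 _ hv2C x hxC1
    have hv3y : ⁅⁅⁅x, y⁆, x⁆, y⁆ = 0 := by
      rw [thin_id_y ⁅x, y⁆ x y, hv2y, zero_lie, zero_add, lie_self]
    have hv3ne : ⁅⁅x, y⁆, x⁆ ≠ 0 := by
      intro h0
      have hbotC : C 3 = ⊥ := by
        rw [Submodule.eq_bot_iff]
        intro u hu
        obtain ⟨α, β, hu'⟩ := hcov 2 ⁅x, y⁆ hv2C hv2ne u hu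
        rw [hu', h0, smul_zero, zero_add, hv2y, smul_zero]
      rw [hbotC] at hC3r
      simp [finrank_bot] at hC3r
    have hdead3 : ∀ u ∈ C 3, ⁅u, y⁆ = 0 := by
      intro u hu
      obtain ⟨α, β, hu'⟩ := hcov 2 ⁅x, y⁆ hv2C hv2ne u hu
      rw [hu', hv2y, smul_zero, add_zero, smul_lie, hv3y, smul_zero]
    have hv4C : ⁅⁅⁅x, y⁆, x⁆, x⁆ ∈ C 4 := hthin.bracket_mem 3 1 _ hv3C x hxC1
    have hv4ne : ⁅⁅⁅x, y⁆, x⁆, x⁆ ≠ 0 := by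
      intro h0
      have hbotC : C 4 = ⊥ := by
        rw [Submodule.eq_bot_iff]
        intro u hu
        obtain ⟨α, β, hu'⟩ := hcov 3 ⁅⁅x, y⁆, x⁆ hv3C hv3ne u hu
        rw [hu', h0, smul_zero, zero_add, hv3y, smul_zero]
      rw [hbotC] at hC4r
      simp [finrank_bot] at hC4r
    have hv5C : ⁅⁅⁅⁅x, y⁆, x⁆, x⁆, x⁆ ∈ C 5 := hthin.bracket_mem 4 1 _ hv4C x hxC1
    -- the element c = [v2,v3] and its properties
    have hcC : ⁅⁅x, y⁆, ⁅⁅x, y⁆, x⁆⁆ ∈ C 5 := hthin.bracket_mem 2 3 _ hv2C _ hv3C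
    have hcy : ⁅⁅⁅x, y⁆, ⁅⁅x, y⁆, x⁆⁆, y⁆ = 0 := by
      rw [thin_id_y ⁅x, y⁆ ⁅⁅x, y⁆, x⁆ y, hv2y, zero_lie, hv3y, lie_zero, add_zero]
    have hv4yval : ⁅⁅⁅⁅x, y⁆, x⁆, x⁆, y⁆ = -⁅⁅x, y⁆, ⁅⁅x, y⁆, x⁆⁆ := by
      rw [thin_id_y ⁅⁅x, y⁆, x⁆ x y, hv3y, zero_lie, zero_add]
      exact neg_eq_iff_eq_neg.mp (lie_skew ⁅x, y⁆ ⁅⁅x, y⁆, x⁆)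
    have hv2v4 : ⁅⁅x, y⁆, ⁅⁅⁅x, y⁆, x⁆, x⁆⁆ = ⁅⁅⁅x, y⁆, ⁅⁅x, y⁆, x⁆⁆, x⁆ := by
      rw [thin_id_v ⁅x, y⁆ ⁅⁅x, y⁆, x⁆ x, lie_self, sub_zero]
    have hv5yval : ⁅⁅⁅⁅⁅x, y⁆, x⁆, x⁆, x⁆, y⁆ =
        -(⁅⁅⁅x, y⁆, ⁅⁅x, y⁆, x⁆⁆, x⁆ + ⁅⁅⁅x, y⁆, ⁅⁅x, y⁆, x⁆⁆, x⁆) := by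
      rw [thin_id_y ⁅⁅⁅x, y⁆, x⁆, x⁆ x y, hv4yval, neg_lie,
        neg_eq_iff_eq_neg.mp (lie_skew ⁅x, y⁆ ⁅⁅⁅x, y⁆, x⁆, x⁆), hv2v4]
      abel
    -- v5 is nonzero
    have hkC6 : finrank F (C 6) ≠ 0 := by
      by_cases hk6 : k = 6
      · rw [hk6] at hdiam
        omega
      · have := hone 6 (by omega) (by omega)
        omega
    have hv5ne : ⁅⁅⁅⁅x, y⁆, x⁆, x⁆, x⁆ ≠ 0 := by
      intro h0
      have hcne : ⁅⁅x, y⁆, ⁅⁅x, y⁆, x⁆⁆ ≠ 0 := by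
        intro hc0
        have hbotC : C 5 = ⊥ := by
          rw [Submodule.eq_bot_iff]
          intro u hu
          obtain ⟨α, β, hu'⟩ := hcov 4 _ hv4C hv4ne u hu
          rw [hu', h0, smul_zero, zero_add, hv4yval, hc0, neg_zero, smul_zero]
        rw [hbotC] at hC5r
        simp [finrank_bot] at hC5r
      have hu60 : ⁅⁅⁅x, y⁆, ⁅⁅x, y⁆, x⁆⁆, x⁆ = 0 := by
        have h := hv5yval
        rw [h0, zero_lie] at h
        have h' := neg_eq_zero.mp h.symm
        have h'' : (2 : F) • ⁅⁅⁅x, y⁆, ⁅⁅x, y⁆, x⁆⁆, x⁆ = 0 := by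
          rw [two_smul]
          exact h'
        rcases smul_eq_zero.mp h'' with h3 | h3
        · exact absurd h3 hchar2
        · exact h3
      have hC6bot : C 6 = ⊥ := by
        rw [Submodule.eq_bot_iff]
        intro u hu
        obtain ⟨α, β, hu'⟩ := hcov 5 _ hcC hcne u hu
        rw [hu', hu60, smul_zero, zero_add, hcy, smul_zero]
      rw [hC6bot] at hkC6
      simp [finrank_bot] at hkC6
    -- c = γ • v5
    have hone5 : ∀ u ∈ C 5, ∃ d : F, u = d • ⁅⁅⁅⁅x, y⁆, x⁆, x⁆, x⁆ := by
      intro u hu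
      have hb : (⟨⁅⁅⁅⁅x, y⁆, x⁆, x⁆, x⁆, hv5C⟩ : C 5) ≠ 0 :=
        fun h => hv5ne (congrArg Subtype.val h)
      obtain ⟨d, hd⟩ :=
        (finrank_eq_one_iff_of_nonzero' (⟨_, hv5C⟩ : C 5) hb).mp hC5r ⟨u, hu⟩
      exact ⟨d, (congrArg Subtype.val hd).symm⟩
    obtain ⟨γ, hγ⟩ := hone5 _ hcC
    have hu6γ : ⁅⁅⁅x, y⁆, ⁅⁅x, y⁆, x⁆⁆, x⁆ = γ • ⁅⁅⁅⁅⁅x, y⁆, x⁆, x⁆, x⁆, x⁆ := by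
      rw [hγ, smul_lie]
    have hC6le : ∀ u ∈ C 6, ∃ d : F, u = d • ⁅⁅⁅⁅⁅x, y⁆, x⁆, x⁆, x⁆, x⁆ := by
      intro u hu
      obtain ⟨α, β, hu'⟩ := hcov 5 _ hv5C hv5ne u hu
      refine ⟨α - β * γ - β * γ, ?_⟩
      rw [hu', hv5yval, hu6γ]
      module
    have hkne6 : k ≠ 6 := by
      intro hk6
      have h2d : finrank F (C 6) = 2 := by rw [← hk6]; exact hdiam
      have hle : C 6 ≤ Submodule.span F {⁅⁅⁅⁅⁅x, y⁆, x⁆, x⁆, x⁆, x⁆} := by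
        intro w hw
        obtain ⟨d, rfl⟩ := hC6le w hw
        exact Submodule.smul_mem _ _ (Submodule.subset_span rfl)
      by_cases h0 : ⁅⁅⁅⁅⁅x, y⁆, x⁆, x⁆, x⁆, x⁆ = 0
      · have hbotC : C 6 = ⊥ := by
          rw [Submodule.eq_bot_iff]
          intro u hu
          obtain ⟨d, hd⟩ := hC6le u hu
          rw [hd, h0, smul_zero]
        rw [hbotC] at h2d
        simp [finrank_bot] at h2d
      · have hm := Submodule.finrank_mono hle
        rw [finrank_span_singleton h0] at hm
        omega
    have hC6r : finrank F (C 6) = 1 := hone 6 (by omega) (by omega)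
    have hv6ne : ⁅⁅⁅⁅⁅x, y⁆, x⁆, x⁆, x⁆, x⁆ ≠ 0 := by
      intro h0
      have hbotC : C 6 = ⊥ := by
        rw [Submodule.eq_bot_iff]
        intro u hu
        obtain ⟨d, hd⟩ := hC6le u hu
        rw [hd, h0, smul_zero]
      rw [hbotC] at hC6r
      simp [finrank_bot] at hC6r
    have hγ0 : γ = 0 := by
      have h := hcy
      rw [hγ, smul_lie, hv5yval, hu6γ] at h
      have h' : ((2 : F) * (γ * γ)) • ⁅⁅⁅⁅⁅x, y⁆, x⁆, x⁆, x⁆, x⁆ = 0 := by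
        rw [show ((2 : F) * (γ * γ)) • ⁅⁅⁅⁅⁅x, y⁆, x⁆, x⁆, x⁆, x⁆ =
          -(γ • -(γ • ⁅⁅⁅⁅⁅x, y⁆, x⁆, x⁆, x⁆, x⁆ + γ • ⁅⁅⁅⁅⁅x, y⁆, x⁆, x⁆, x⁆, x⁆))
          from by module, h, neg_zero]
      rcases smul_eq_zero.mp h' with h'' | h''
      · rcases mul_eq_zero.mp h'' with h3 | h3
        · exact absurd h3 hchar2
        · rcases mul_eq_zero.mp h3 with h4 | h4 <;> exact h4
      · exact absurd h'' hv6ne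
    have hv4y : ⁅⁅⁅⁅x, y⁆, x⁆, x⁆, y⁆ = 0 := by
      rw [hv4yval, hγ, hγ0, zero_smul, neg_zero]
    have hv5y : ⁅⁅⁅⁅⁅x, y⁆, x⁆, x⁆, x⁆, y⁆ = 0 := by
      rw [hv5yval, hγ, hγ0, zero_smul, zero_lie, add_zero, neg_zero]
    -- the main induction
    have main := thin_main_induction x y ⁅x, y⁆ ⁅⁅x, y⁆, x⁆ ⁅⁅⁅x, y⁆, x⁆, x⁆
      ⁅⁅⁅⁅x, y⁆, x⁆, x⁆, x⁆ hthin.zero_bot hthin.bracket_mem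
      (fun i hi h => thin_botsucc hthin hi h) hcov hxC1 hyC hv2C rfl rfl rfl rfl
      hv2y hv3y hv4y hv5y hbase1 hdead2 hdead3 hchar2
    refine ⟨y, hyC, hy0, ?_⟩
    intro z
    have hz : z ∈ (⊤ : Submodule F L) := Submodule.mem_top
    rw [← hthin.internal.submodule_iSup_eq_top] at hz
    refine Submodule.iSup_induction (motive := fun z => ⁅⁅z, y⁆, y⁆ = 0) _ hz
      (fun i u hu => (main i).1 u hu) ?_ ?_
    · show ⁅⁅(0 : L), y⁆, y⁆ = 0
      simp
    · intro a b ha hb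
      have ha' : ⁅⁅a, y⁆, y⁆ = 0 := ha
      have hb' : ⁅⁅b, y⁆, y⁆ = 0 := hb
      show ⁅⁅a + b, y⁆, y⁆ = 0
      rw [add_lie, add_lie, ha', hb', add_zero]
end

section
/- Let L be a thin Lie algebra over an algebraically closed field. Then no two consecutive homogeneous components L_j and L_{j+1} can both be two-dimensional. -/
open Module

/-- Over an algebraically closed field, no two consecutive homogeneous
components of a thin Lie algebra are both diamonds. -/
theorem thin_no_consecutive_diamonds_algClosed {F L : Type*} [Field F] [IsAlgClosed F]
    [LieRing L] [LieAlgebra F L]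
    {C : ℕ → Submodule F L} (hthin : IsThinGraded F L C) (j : ℕ) :
    ¬ (Module.finrank F (C j) = 2 ∧ Module.finrank F (C (j + 1)) = 2) := by
  rintro ⟨hj, hj1⟩
  have hfdj : Module.Finite F (C j) := Module.finite_of_finrank_pos (by rw [hj]; norm_num)
  have hfd1 : Module.Finite F (C 1) := Module.finite_of_finrank_pos (by rw [hthin.dim_one]; norm_num)
  have hfdj1 : Module.Finite F (C (j + 1)) := Module.finite_of_finrank_pos (by rw [hj1]; norm_num)
  -- the bilinear bracket map `C j → Hom(C 1, C (j+1))`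
  let Φ : C j →ₗ[F] (C 1 →ₗ[F] C (j + 1)) :=
    { toFun := fun z =>
        { toFun := fun a => ⟨⁅(z : L), (a : L)⁆, hthin.bracket_mem j 1 z z.2 a a.2⟩
          map_add' := fun a b => by ext; simp [lie_add]
          map_smul' := fun s a => by ext; simp [lie_smul] }
      map_add' := fun z w => by ext a; simp [add_lie]
      map_smul' := fun s z => by ext a; simp [smul_lie] }
  -- for nonzero `z`, `Φ z` is surjective (covering property)
  have hsurj : ∀ z : C j, z ≠ 0 → Function.Surjective (Φ z) := by
    intro z hz y
    have hz' : (z : L) ≠ 0 := fun h => hz (Subtype.ext h)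
    have hcov := hthin.covering j z z.2 hz'
    have hset : {w : L | ∃ a ∈ C 1, w = ⁅(z : L), a⁆} =
        (LieAlgebra.ad F L (z : L)) '' (C 1 : Set L) := by
      ext w
      simp only [Set.mem_setOf_eq, Set.mem_image, SetLike.mem_coe, LieAlgebra.ad_apply]
      exact ⟨fun ⟨a, ha, h⟩ => ⟨a, ha, h.symm⟩, fun ⟨a, ha, h⟩ => ⟨a, ha, h.symm⟩⟩
    have hmap : Submodule.map (LieAlgebra.ad F L (z : L)) (C 1) = C (j + 1) := by
      rw [← hcov, hset, Submodule.span_image, Submodule.span_eq]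
    have hy : (y : L) ∈ Submodule.map (LieAlgebra.ad F L (z : L)) (C 1) := by
      rw [hmap]; exact y.2
    obtain ⟨a, ha, hay⟩ := hy
    exact ⟨⟨a, ha⟩, Subtype.ext hay⟩
  -- identify `C (j+1)` with `C 1`
  let e : (C (j + 1)) ≃ₗ[F] (C 1) :=
    LinearEquiv.ofFinrankEq _ _ (hj1.trans hthin.dim_one.symm)
  let f : C j → (C 1 →ₗ[F] C 1) := fun z => e.toLinearMap ∘ₗ Φ z
  have hdet : ∀ z : C j, z ≠ 0 → LinearMap.det (f z) ≠ 0 := by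
    intro z hz
    have hsf : Function.Surjective (f z) := e.surjective.comp (hsurj z hz)
    have hbij : Function.Bijective (f z) :=
      ⟨(LinearMap.injective_iff_surjective).mpr hsf, hsf⟩
    have := LinearEquiv.isUnit_det' (LinearEquiv.ofBijective (f z) hbij)
    have hcoe : ((LinearEquiv.ofBijective (f z) hbij : C 1 ≃ₗ[F] C 1) : C 1 →ₗ[F] C 1) = f z := by
      ext x; simp
    rw [hcoe] at this
    simpa using this.ne_zero
  -- bases
  let b1 : Basis (Fin 2) F (C 1) := Module.finBasisOfFinrankEq F _ hthin.dim_one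
  let bj : Basis (Fin 2) F (C j) := Module.finBasisOfFinrankEq F _ hj
  let M : C j → Matrix (Fin 2) (Fin 2) F := fun z => LinearMap.toMatrix b1 b1 (f z)
  have hMdet : ∀ z : C j, z ≠ 0 → (M z).det ≠ 0 := by
    intro z hz
    rw [show (M z).det = LinearMap.det (f z) from LinearMap.det_toMatrix b1 (f z)]
    exact hdet z hz
  set A := M (bj 0) with hA
  set B := M (bj 1) with hB
  have hAdet : A.det ≠ 0 := hMdet _ (bj.ne_zero 0)
  -- the determinant polynomial
  set p : Polynomial F := Polynomial.C A.det * Polynomial.X ^ 2 +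
    Polynomial.C (A 0 0 * B 1 1 + B 0 0 * A 1 1 - A 0 1 * B 1 0 - B 0 1 * A 1 0) *
      Polynomial.X + Polynomial.C B.det with hp
  have heval : ∀ s : F, p.eval s = (s • A + B).det := by
    intro s
    simp only [hp, Polynomial.eval_add, Polynomial.eval_mul, Polynomial.eval_pow,
      Polynomial.eval_C, Polynomial.eval_X, Matrix.det_fin_two, Matrix.add_apply,
      Matrix.smul_apply, smul_eq_mul]
    ring
  have hdeg : p.degree = 2 := Polynomial.degree_quadratic hAdet
  obtain ⟨s, hs⟩ := IsAlgClosed.exists_root p (by rw [hdeg]; exact two_ne_zero)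
  have hroot : (s • A + B).det = 0 := by
    rw [← heval s]; exact hs
  -- the element `s • bj 0 + bj 1` is nonzero
  have hzne : s • bj 0 + bj 1 ≠ 0 := by
    intro h
    have hli := Fintype.linearIndependent_iff.mp bj.linearIndependent
    have := hli ![s, 1] (by
      rw [Fin.sum_univ_two]
      simpa using h) 1
    simp at this
  have hMlin : M (s • bj 0 + bj 1) = s • A + B := by
    simp only [M, f, hA, hB, map_add, map_smul, LinearMap.comp_add, LinearMap.comp_smul]
  exact hMdet _ hzne (hMlin ▸ hroot)
end
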